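/- arXiv:2008.03803 — 12 statements merged into one kernel-verified Lean document; each statement's English description precedes it below -/
import Mathlib

section
/- The ring F_2 × F_2 is the union of three proper subrings, and is not the union of two proper subrings; that is, its covering number is 3. -/
/-- `R` is the union of `n` proper subrings (subrings need not contain 1). -/
def CoversWith (R : Type*) [NonUnitalRing R] (n : ℕ) : Prop :=
  ∃ c : Fin n → NonUnitalSubring R, (∀ i, c i ≠ ⊤) ∧ ∀ x : R, ∃ i, x ∈ c i

private def S1 : NonUnitalSubring (ZMod 2 × ZMod 2) where
  carrier := {x | x.2 = 0}
  zero_mem' := rfl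
  add_mem' := by intro a b ha hb; simp_all [Set.mem_setOf_eq, Prod.snd_add]
  neg_mem' := by intro a ha; simp_all [Set.mem_setOf_eq]
  mul_mem' := by intro a b ha hb; simp_all [Set.mem_setOf_eq]

private def S2 : NonUnitalSubring (ZMod 2 × ZMod 2) where
  carrier := {x | x.1 = 0}
  zero_mem' := rfl
  add_mem' := by intro a b ha hb; simp_all [Set.mem_setOf_eq]
  neg_mem' := by intro a ha; simp_all [Set.mem_setOf_eq]
  mul_mem' := by intro a b ha hb; simp_all [Set.mem_setOf_eq]

private def S3 : NonUnitalSubring (ZMod 2 × ZMod 2) where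
  carrier := {x | x.1 = x.2}
  zero_mem' := rfl
  add_mem' := by intro a b ha hb; simp_all [Set.mem_setOf_eq]
  neg_mem' := by intro a ha; simp_all [Set.mem_setOf_eq]
  mul_mem' := by intro a b ha hb; simp_all [Set.mem_setOf_eq]

private lemma cases4 : ∀ x : ZMod 2 × ZMod 2,
    x = 0 ∨ x = (1, 0) ∨ x = (0, 1) ∨ x = (1, 1) := by decide

private lemma key (s : NonUnitalSubring (ZMod 2 × ZMod 2))
    (ha : ((1 : ZMod 2), (0 : ZMod 2)) ∈ s) (hb : ((0 : ZMod 2), (1 : ZMod 2)) ∈ s) :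
    s = ⊤ := by
  have h11 : ((1 : ZMod 2), (1 : ZMod 2)) ∈ s := by
    have : ((1 : ZMod 2), (1 : ZMod 2)) = (1, 0) + (0, 1) := by decide
    rw [this]; exact s.add_mem ha hb
  ext x
  simp only [NonUnitalSubring.mem_top, iff_true]
  rcases cases4 x with h | h | h | h <;> subst h
  · exact s.zero_mem
  · exact ha
  · exact hb
  · exact h11

/-- The covering number of `F₂ × F₂` is 3. -/
theorem covering_number_F2xF2_eq_three :
    CoversWith (ZMod 2 × ZMod 2) 3 ∧ ¬ CoversWith (ZMod 2 × ZMod 2) 2 := by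
  constructor
  · refine ⟨![S1, S2, S3], ?_, ?_⟩
    · intro i h
      fin_cases i
      · have h1 : ((0 : ZMod 2), (1 : ZMod 2)) ∈ (⊤ : NonUnitalSubring (ZMod 2 × ZMod 2)) :=
          trivial
        rw [← h] at h1
        exact one_ne_zero (α := ZMod 2) h1
      · have h1 : ((1 : ZMod 2), (0 : ZMod 2)) ∈ (⊤ : NonUnitalSubring (ZMod 2 × ZMod 2)) :=
          trivial
        rw [← h] at h1
        exact one_ne_zero (α := ZMod 2) h1
      · have h1 : ((1 : ZMod 2), (0 : ZMod 2)) ∈ (⊤ : NonUnitalSubring (ZMod 2 × ZMod 2)) :=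
          trivial
        rw [← h] at h1
        exact one_ne_zero (α := ZMod 2) h1
    · intro x
      rcases cases4 x with h | h | h | h <;> subst h
      · exact ⟨0, rfl⟩
      · exact ⟨0, rfl⟩
      · exact ⟨1, rfl⟩
      · exact ⟨2, rfl⟩
  · rintro ⟨c, hne, hcov⟩
    obtain ⟨i, hi⟩ := hcov ((1 : ZMod 2), (0 : ZMod 2))
    obtain ⟨j, hj⟩ := hcov ((0 : ZMod 2), (1 : ZMod 2))
    obtain ⟨k, hk⟩ := hcov ((1 : ZMod 2), (1 : ZMod 2))
    have key2 : ∀ m : Fin 2, ((1 : ZMod 2), (1 : ZMod 2)) ∈ c m →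
        ((1 : ZMod 2), (0 : ZMod 2)) ∈ c m → c m = ⊤ := by
      intro m h11 h10
      have : ((0 : ZMod 2), (1 : ZMod 2)) = (1, 1) + (1, 0) := by decide
      exact key _ h10 (this ▸ (c m).add_mem h11 h10)
    have key3 : ∀ m : Fin 2, ((1 : ZMod 2), (1 : ZMod 2)) ∈ c m →
        ((0 : ZMod 2), (1 : ZMod 2)) ∈ c m → c m = ⊤ := by
      intro m h11 h01
      have : ((1 : ZMod 2), (0 : ZMod 2)) = (1, 1) + (0, 1) := by decide
      exact key _ (this ▸ (c m).add_mem h11 h01) h01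
    fin_cases i <;> fin_cases j <;> fin_cases k <;>
      simp_all [-Fin.forall_fin_two] <;>
      first
        | exact hne _ (key _ hi hj)
        | exact hne _ (key2 _ hk hi)
        | exact hne _ (key3 _ hk hj)
end

section
/- The covering number of F_4 × F_4 is 4: it is the union of its four maximal subrings, but no three proper subrings cover it. -/
namespace F4Cover

abbrev F : Type := GaloisField 2 2
abbrev K : Type := F × F

lemma addself (a : F) : a + a = 0 := by
  have : (2 : ℕ) * a = 0 := by
    rw [CharP.cast_eq_zero F 2, zero_mul]
  calc a + a = (2 : ℕ) * a := by push_cast; ring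
  _ = 0 := this

lemma exists_omega : ∃ ω : F, ω ≠ 0 ∧ ω ≠ 1 ∧ ω * ω = ω + 1 ∧
    ∀ x : F, x = 0 ∨ x = 1 ∨ x = ω ∨ x = ω + 1 := by
  letI : Fintype F := Fintype.ofFinite F
  letI : DecidableEq F := Classical.decEq F
  have hcard : Fintype.card F = 4 := by
    have := GaloisField.card 2 2 (by norm_num)
    rwa [Nat.card_eq_fintype_card] at this
  -- find an element outside {0,1}
  obtain ⟨ω, hω⟩ : ∃ ω : F, ω ∉ ({0, 1} : Finset F) := by
    by_contra h
    push_neg at h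
    have hsub : (Finset.univ : Finset F) ⊆ {0, 1} := fun x _ => h x
    have := Finset.card_le_card hsub
    rw [Finset.card_univ, hcard] at this
    have h2 : ({0, 1} : Finset F).card ≤ 2 := Finset.card_insert_le _ _ |>.trans (by simp)
    omega
  simp only [Finset.mem_insert, Finset.mem_singleton, not_or] at hω
  obtain ⟨h0, h1⟩ := hω
  have h3 : ω ^ 3 = 1 := by
    have := FiniteField.pow_card_sub_one_eq_one ω h0
    rwa [hcard] at this
  have hquad : ω * ω + ω + 1 = 0 := by
    have hfac : (ω - 1) * (ω * ω + ω + 1) = 0 := by linear_combination h3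
    rcases mul_eq_zero.mp hfac with h | h
    · exact absurd (sub_eq_zero.mp h) h1
    · exact h
  have hsq : ω * ω = ω + 1 := by
    linear_combination hquad - addself ω - addself 1
  refine ⟨ω, h0, h1, hsq, ?_⟩
  -- the four elements are distinct, hence exhaust F
  have d1 : ω + 1 ≠ 0 := by
    intro h; apply h1; linear_combination h - addself 1
  have d2 : ω + 1 ≠ 1 := by
    intro h; apply h0; linear_combination h
  have d3 : ω + 1 ≠ ω := by
    intro h; exact one_ne_zero (by linear_combination h : (1 : F) = 0)
  have hset : ({0, 1, ω, ω + 1} : Finset F) = Finset.univ := by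
    apply Finset.eq_univ_of_card
    rw [hcard]
    rw [Finset.card_insert_of_notMem (by simp [Ne.symm h0, Ne.symm d1, (zero_ne_one (α := F))]),
        Finset.card_insert_of_notMem (by simp [Ne.symm h1, Ne.symm d2]),
        Finset.card_insert_of_notMem (by simp [Ne.symm d3]),
        Finset.card_singleton]
  intro x
  have : x ∈ ({0, 1, ω, ω + 1} : Finset F) := hset ▸ Finset.mem_univ x
  simpa using this

/-- `F₄ × F₂` -/
noncomputable def M1 : NonUnitalSubring K where
  carrier := {p : K | p.2 * p.2 = p.2}
  add_mem' := by
    intro a b ha hb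
    simp only [Set.mem_setOf_eq, Prod.snd_add] at *
    linear_combination ha + hb + addself (a.2 * b.2)
  zero_mem' := by simp
  mul_mem' := by
    intro a b ha hb
    simp only [Set.mem_setOf_eq, Prod.snd_mul] at *
    linear_combination (b.2 * b.2) * ha + a.2 * hb
  neg_mem' := by
    intro a ha
    simp only [Set.mem_setOf_eq, Prod.snd_neg] at *
    linear_combination ha + addself a.2

@[simp] lemma mem_M1 (p : K) : p ∈ M1 ↔ p.2 * p.2 = p.2 := Iff.rfl

/-- `F₂ × F₄` -/
noncomputable def M2 : NonUnitalSubring K where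
  carrier := {p : K | p.1 * p.1 = p.1}
  add_mem' := by
    intro a b ha hb
    simp only [Set.mem_setOf_eq, Prod.fst_add] at *
    linear_combination ha + hb + addself (a.1 * b.1)
  zero_mem' := by simp
  mul_mem' := by
    intro a b ha hb
    simp only [Set.mem_setOf_eq, Prod.fst_mul] at *
    linear_combination (b.1 * b.1) * ha + a.1 * hb
  neg_mem' := by
    intro a ha
    simp only [Set.mem_setOf_eq, Prod.fst_neg] at *
    linear_combination ha + addself a.1

@[simp] lemma mem_M2 (p : K) : p ∈ M2 ↔ p.1 * p.1 = p.1 := Iff.rfl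

/-- the diagonal -/
noncomputable def M3 : NonUnitalSubring K where
  carrier := {p : K | p.1 = p.2}
  add_mem' := by
    intro a b ha hb
    simp only [Set.mem_setOf_eq, Prod.fst_add, Prod.snd_add] at *
    rw [ha, hb]
  zero_mem' := by simp
  mul_mem' := by
    intro a b ha hb
    simp only [Set.mem_setOf_eq, Prod.fst_mul, Prod.snd_mul] at *
    rw [ha, hb]
  neg_mem' := by
    intro a ha
    simp only [Set.mem_setOf_eq, Prod.fst_neg, Prod.snd_neg] at *
    rw [ha]

@[simp] lemma mem_M3 (p : K) : p ∈ M3 ↔ p.1 = p.2 := Iff.rfl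

/-- the graph of Frobenius -/
noncomputable def M4 : NonUnitalSubring K where
  carrier := {p : K | p.2 = p.1 * p.1}
  add_mem' := by
    intro a b ha hb
    simp only [Set.mem_setOf_eq, Prod.fst_add, Prod.snd_add] at *
    linear_combination ha + hb - addself (a.1 * b.1)
  zero_mem' := by simp
  mul_mem' := by
    intro a b ha hb
    simp only [Set.mem_setOf_eq, Prod.fst_mul, Prod.snd_mul] at *
    linear_combination b.2 * ha + (a.1 * a.1) * hb
  neg_mem' := by
    intro a ha
    simp only [Set.mem_setOf_eq, Prod.fst_neg, Prod.snd_neg] at *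
    linear_combination -ha - addself (a.1 * a.1)

@[simp] lemma mem_M4 (p : K) : p ∈ M4 ↔ p.2 = p.1 * p.1 := Iff.rfl

section Omega

variable (ω : F) (h0 : ω ≠ 0) (h1 : ω ≠ 1) (hsq : ω * ω = ω + 1)
  (hall : ∀ x : F, x = 0 ∨ x = 1 ∨ x = ω ∨ x = ω + 1)

include hsq in
lemma hsq' : (ω + 1) * (ω + 1) = ω := by
  linear_combination hsq + addself ω + addself 1

include h0 h1 hsq hall in
lemma snd_all (S : NonUnitalSubring K) (c : F) (hc0 : c ≠ 0) (hc1 : c ≠ 1)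
    (hc : ((0 : F), c) ∈ S) : ∀ z : F, ((0 : F), z) ∈ S := by
  have key : ((0 : F), ω) ∈ S ∧ ((0 : F), ω + 1) ∈ S := by
    have hsqmem : ((0 : F), c * c) ∈ S := by
      have := S.mul_mem hc hc
      have he : (((0 : F), c) : K) * ((0 : F), c) = ((0 : F), c * c) := by
        ext
        · simp
        · simp
      rwa [he] at this
    rcases hall c with h | h | h | h
    · exact absurd h hc0
    · exact absurd h hc1
    · subst h
      rw [hsq] at hsqmem
      exact ⟨hc, hsqmem⟩
    · subst h
      rw [hsq' ω hsq] at hsqmem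
      exact ⟨hsqmem, hc⟩
  obtain ⟨hmω, hmω1⟩ := key
  have hm1 : ((0 : F), (1 : F)) ∈ S := by
    have := S.add_mem hmω hmω1
    have he : (((0 : F), ω) : K) + ((0 : F), ω + 1) = ((0 : F), (1 : F)) := by
      ext
      · simp
      · simp only [Prod.snd_add]
        linear_combination addself ω
    rwa [he] at this
  intro z
  rcases hall z with h | h | h | h
  · subst h; exact S.zero_mem
  · subst h; exact hm1
  · subst h; exact hmω
  · subst h; exact hmω1

include h0 h1 hsq hall in
lemma fst_all (S : NonUnitalSubring K) (c : F) (hc0 : c ≠ 0) (hc1 : c ≠ 1)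
    (hc : (c, (0 : F)) ∈ S) : ∀ z : F, (z, (0 : F)) ∈ S := by
  have key : (ω, (0 : F)) ∈ S ∧ (ω + 1, (0 : F)) ∈ S := by
    have hsqmem : (c * c, (0 : F)) ∈ S := by
      have := S.mul_mem hc hc
      have he : ((c, (0 : F)) : K) * (c, (0 : F)) = (c * c, (0 : F)) := by
        ext
        · simp
        · simp
      rwa [he] at this
    rcases hall c with h | h | h | h
    · exact absurd h hc0
    · exact absurd h hc1
    · subst h
      rw [hsq] at hsqmem
      exact ⟨hc, hsqmem⟩
    · subst h
      rw [hsq' ω hsq] at hsqmem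
      exact ⟨hsqmem, hc⟩
  obtain ⟨hmω, hmω1⟩ := key
  have hm1 : ((1 : F), (0 : F)) ∈ S := by
    have := S.add_mem hmω hmω1
    have he : ((ω, (0 : F)) : K) + (ω + 1, (0 : F)) = ((1 : F), (0 : F)) := by
      ext
      · simp only [Prod.fst_add]
        linear_combination addself ω
      · simp
    rwa [he] at this
  intro z
  rcases hall z with h | h | h | h
  · subst h; exact S.zero_mem
  · subst h; exact hm1
  · subst h; exact hmω
  · subst h; exact hmω1

end Omega

lemma top_of_rows_cols (N : NonUnitalSubring K)
    (hr : ∀ z : F, (z, (0 : F)) ∈ N) (hc : ∀ z : F, ((0 : F), z) ∈ N) : N = ⊤ := by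
  apply eq_top_iff.mpr
  intro p _
  have := N.add_mem (hr p.1) (hc p.2)
  have he : ((p.1, (0 : F)) : K) + ((0 : F), p.2) = p := by
    ext
    · simp
    · simp
  rwa [he] at this

lemma top_of_diag_cols (N : NonUnitalSubring K)
    (hd : ∀ z : F, ((z, z) : K) ∈ N) (hc : ∀ z : F, ((0 : F), z) ∈ N) : N = ⊤ := by
  apply eq_top_iff.mpr
  intro p _
  have := N.add_mem (hd p.1) (hc (p.1 + p.2))
  have he : ((p.1, p.1) : K) + ((0 : F), p.1 + p.2) = p := by
    ext
    · simp
    · simp only [Prod.snd_add]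
      linear_combination addself p.1
  rwa [he] at this

lemma top_of_graph_cols (N : NonUnitalSubring K)
    (hg : ∀ z : F, ((z, z * z) : K) ∈ N) (hc : ∀ z : F, ((0 : F), z) ∈ N) : N = ⊤ := by
  apply eq_top_iff.mpr
  intro p _
  have := N.add_mem (hg p.1) (hc (p.1 * p.1 + p.2))
  have he : ((p.1, p.1 * p.1) : K) + ((0 : F), p.1 * p.1 + p.2) = p := by
    ext
    · simp
    · simp only [Prod.snd_add]
      linear_combination addself (p.1 * p.1)
  rwa [he] at this

end F4Cover

open F4Cover in
/-- The covering number of `F₄ × F₄` is 4: it is the union of its four maximal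
subrings, but no three proper subrings cover it. -/
theorem covering_number_F4xF4_eq_four :
    (∃ c : Fin 4 → NonUnitalSubring (GaloisField 2 2 × GaloisField 2 2),
      (∀ i, c i ≠ ⊤ ∧ ∀ N, c i < N → N = ⊤) ∧ ∀ x, ∃ i, x ∈ c i) ∧
    ¬ CoversWith (GaloisField 2 2 × GaloisField 2 2) 3 := by
  obtain ⟨ω, h0, h1, hsq, hall⟩ := exists_omega
  have hω1_0 : ω + 1 ≠ 0 := by
    intro h; apply h1; linear_combination h - addself 1
  have hω1_1 : ω + 1 ≠ 1 := by
    intro h; apply h0; linear_combination h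
  -- pair lemmas
  have P12 : ∀ S : NonUnitalSubring K, ((0 : F), ω) ∈ S → (ω, (0 : F)) ∈ S → S = ⊤ := by
    intro S hA hB
    exact top_of_rows_cols S (fst_all ω h0 h1 hsq hall S ω h0 h1 hB)
      (snd_all ω h0 h1 hsq hall S ω h0 h1 hA)
  have P13 : ∀ S : NonUnitalSubring K, ((0 : F), ω) ∈ S → ((ω, ω) : K) ∈ S → S = ⊤ := by
    intro S hA hB
    apply P12 S hA
    have := S.add_mem hB hA
    have he : ((ω, ω) : K) + ((0 : F), ω) = (ω, (0 : F)) := by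
      ext
      · simp
      · simp only [Prod.snd_add]; exact addself ω
    rwa [he] at this
  have P14 : ∀ S : NonUnitalSubring K, ((0 : F), ω) ∈ S → ((ω, ω + 1) : K) ∈ S → S = ⊤ := by
    intro S hA hB
    apply P12 S hA
    have hsqm : ((0 : F), ω + 1) ∈ S := by
      have := S.mul_mem hA hA
      have he : (((0 : F), ω) : K) * ((0 : F), ω) = ((0 : F), ω + 1) := by
        ext
        · simp
        · simp only [Prod.snd_mul]; exact hsq
      rwa [he] at this
    have := S.add_mem hB hsqm
    have he : ((ω, ω + 1) : K) + ((0 : F), ω + 1) = (ω, (0 : F)) := by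
      ext
      · simp
      · simp only [Prod.snd_add]
        linear_combination addself ω + addself 1
    rwa [he] at this
  have P23 : ∀ S : NonUnitalSubring K, (ω, (0 : F)) ∈ S → ((ω, ω) : K) ∈ S → S = ⊤ := by
    intro S hA hB
    have hc : ((0 : F), ω) ∈ S := by
      have := S.add_mem hB hA
      have he : ((ω, ω) : K) + (ω, (0 : F)) = ((0 : F), ω) := by
        ext
        · simp only [Prod.fst_add]; exact addself ω
        · simp
      rwa [he] at this
    exact P12 S hc hA
  have P24 : ∀ S : NonUnitalSubring K, (ω, (0 : F)) ∈ S → ((ω, ω + 1) : K) ∈ S → S = ⊤ := by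
    intro S hA hB
    have hc : ((0 : F), ω + 1) ∈ S := by
      have := S.add_mem hB hA
      have he : ((ω, ω + 1) : K) + (ω, (0 : F)) = ((0 : F), ω + 1) := by
        ext
        · simp only [Prod.fst_add]; exact addself ω
        · simp
      rwa [he] at this
    have hcols := snd_all ω h0 h1 hsq hall S (ω + 1) hω1_0 hω1_1 hc
    exact P12 S (hcols ω) hA
  have P34 : ∀ S : NonUnitalSubring K, ((ω, ω) : K) ∈ S → ((ω, ω + 1) : K) ∈ S → S = ⊤ := by
    intro S hA hB
    have hone : ((0 : F), (1 : F)) ∈ S := by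
      have := S.add_mem hA hB
      have he : ((ω, ω) : K) + (ω, ω + 1) = ((0 : F), (1 : F)) := by
        ext
        · simp only [Prod.fst_add]; exact addself ω
        · simp only [Prod.snd_add]
          linear_combination addself ω
      rwa [he] at this
    have hc : ((0 : F), ω) ∈ S := by
      have := S.mul_mem hone hA
      have he : (((0 : F), (1 : F)) : K) * (ω, ω) = ((0 : F), ω) := by
        ext
        · simp
        · simp
      rwa [he] at this
    exact P13 S hc hA
  -- properness and maximality of the four subrings
  have prop1 : M1 ≠ ⊤ ∧ ∀ N, M1 < N → N = ⊤ := by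
    constructor
    · intro h
      have hm : (((0 : F), ω) : K) ∈ M1 := by rw [h]; trivial
      have hm' : ω * ω = ω := hm
      rw [hsq] at hm'
      exact one_ne_zero (by linear_combination hm' : (1 : F) = 0)
    · intro N hN
      obtain ⟨x, hxN, hxM⟩ := SetLike.exists_of_lt hN
      have hxM' : ¬ (x.2 * x.2 = x.2) := fun h => hxM ((mem_M1 x).mpr h)
      have hx0 : x.2 ≠ 0 := by intro h; apply hxM'; rw [h]; ring
      have hx1 : x.2 ≠ 1 := by intro h; apply hxM'; rw [h]; ring
      have hrows : ∀ z : F, (z, (0 : F)) ∈ N := by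
        intro z
        exact hN.le (show ((z, (0 : F)) : K) ∈ M1 from by rw [mem_M1]; ring)
      have hcol : ((0 : F), x.2) ∈ N := by
        have := N.add_mem hxN (hrows x.1)
        have he : x + ((x.1, (0 : F)) : K) = ((0 : F), x.2) := by
          ext
          · simp only [Prod.fst_add]; exact addself x.1
          · simp
        rwa [he] at this
      exact top_of_rows_cols N hrows (snd_all ω h0 h1 hsq hall N x.2 hx0 hx1 hcol)
  have prop2 : M2 ≠ ⊤ ∧ ∀ N, M2 < N → N = ⊤ := by
    constructor
    · intro h
      have hm : ((ω, (0 : F)) : K) ∈ M2 := by rw [h]; trivial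
      have hm' : ω * ω = ω := hm
      rw [hsq] at hm'
      exact one_ne_zero (by linear_combination hm' : (1 : F) = 0)
    · intro N hN
      obtain ⟨x, hxN, hxM⟩ := SetLike.exists_of_lt hN
      have hxM' : ¬ (x.1 * x.1 = x.1) := fun h => hxM ((mem_M2 x).mpr h)
      have hx0 : x.1 ≠ 0 := by intro h; apply hxM'; rw [h]; ring
      have hx1 : x.1 ≠ 1 := by intro h; apply hxM'; rw [h]; ring
      have hcols : ∀ z : F, ((0 : F), z) ∈ N := by
        intro z
        exact hN.le (show (((0 : F), z) : K) ∈ M2 from by rw [mem_M2]; ring)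
      have hrow : (x.1, (0 : F)) ∈ N := by
        have := N.add_mem hxN (hcols x.2)
        have he : x + (((0 : F), x.2) : K) = (x.1, (0 : F)) := by
          ext
          · simp
          · simp only [Prod.snd_add]; exact addself x.2
        rwa [he] at this
      exact top_of_rows_cols N (fst_all ω h0 h1 hsq hall N x.1 hx0 hx1 hrow) hcols
  have prop3 : M3 ≠ ⊤ ∧ ∀ N, M3 < N → N = ⊤ := by
    constructor
    · intro h
      have hm : (((0 : F), (1 : F)) : K) ∈ M3 := by rw [h]; trivial
      have hm' : (0 : F) = 1 := hm
      exact zero_ne_one hm'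
    · intro N hN
      obtain ⟨x, hxN, hxM⟩ := SetLike.exists_of_lt hN
      have hxM' : ¬ (x.1 = x.2) := fun h => hxM ((mem_M3 x).mpr h)
      have hdiag : ∀ z : F, ((z, z) : K) ∈ N := by
        intro z
        exact hN.le (show ((z, z) : K) ∈ M3 from rfl)
      have hc : ((0 : F), x.1 + x.2) ∈ N := by
        have := N.add_mem hxN (hdiag x.1)
        have he : x + ((x.1, x.1) : K) = ((0 : F), x.1 + x.2) := by
          ext
          · simp only [Prod.fst_add]; exact addself x.1
          · simp only [Prod.snd_add]; ring
        rwa [he] at this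
      have hc0 : x.1 + x.2 ≠ 0 := by
        intro h
        apply hxM'
        linear_combination h - addself x.2
      have hcols : ∀ z : F, ((0 : F), z) ∈ N := by
        rcases hall (x.1 + x.2) with h | h | h | h
        · exact absurd h hc0
        · rw [h] at hc
          have := N.mul_mem hc (hdiag ω)
          have he : (((0 : F), (1 : F)) : K) * (ω, ω) = ((0 : F), ω) := by
            ext
            · simp
            · simp
          rw [he] at this
          exact snd_all ω h0 h1 hsq hall N ω h0 h1 this
        · rw [h] at hc
          exact snd_all ω h0 h1 hsq hall N ω h0 h1 hc
        · rw [h] at hc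
          exact snd_all ω h0 h1 hsq hall N (ω + 1) hω1_0 hω1_1 hc
      exact top_of_diag_cols N hdiag hcols
  have prop4 : M4 ≠ ⊤ ∧ ∀ N, M4 < N → N = ⊤ := by
    constructor
    · intro h
      have hm : (((0 : F), (1 : F)) : K) ∈ M4 := by rw [h]; trivial
      have hm' : (1 : F) = 0 * 0 := hm
      rw [mul_zero] at hm'
      exact one_ne_zero hm'
    · intro N hN
      obtain ⟨x, hxN, hxM⟩ := SetLike.exists_of_lt hN
      have hxM' : ¬ (x.2 = x.1 * x.1) := fun h => hxM ((mem_M4 x).mpr h)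
      have hg : ∀ z : F, ((z, z * z) : K) ∈ N := by
        intro z
        exact hN.le (show ((z, z * z) : K) ∈ M4 from rfl)
      have hc : ((0 : F), x.1 * x.1 + x.2) ∈ N := by
        have := N.add_mem hxN (hg x.1)
        have he : x + ((x.1, x.1 * x.1) : K) = ((0 : F), x.1 * x.1 + x.2) := by
          ext
          · simp only [Prod.fst_add]; exact addself x.1
          · simp only [Prod.snd_add]; ring
        rwa [he] at this
      have hc0 : x.1 * x.1 + x.2 ≠ 0 := by
        intro h
        apply hxM'
        linear_combination h - addself (x.1 * x.1)
      have hcols : ∀ z : F, ((0 : F), z) ∈ N := by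
        rcases hall (x.1 * x.1 + x.2) with h | h | h | h
        · exact absurd h hc0
        · rw [h] at hc
          have := N.mul_mem hc (hg ω)
          have he : (((0 : F), (1 : F)) : K) * (ω, ω * ω) = ((0 : F), ω + 1) := by
            ext
            · simp
            · simp only [Prod.snd_mul]
              rw [one_mul, hsq]
          rw [he] at this
          exact snd_all ω h0 h1 hsq hall N (ω + 1) hω1_0 hω1_1 this
        · rw [h] at hc
          exact snd_all ω h0 h1 hsq hall N ω h0 h1 hc
        · rw [h] at hc
          exact snd_all ω h0 h1 hsq hall N (ω + 1) hω1_0 hω1_1 hc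
      exact top_of_graph_cols N hg hcols
  constructor
  · refine ⟨![M1, M2, M3, M4], ?_, ?_⟩
    · intro i
      fin_cases i
      · exact prop1
      · exact prop2
      · exact prop3
      · exact prop4
    · intro x
      rcases hall x.2 with h | h | h | h
      · exact ⟨0, show x.2 * x.2 = x.2 from by rw [h]; ring⟩
      · exact ⟨0, show x.2 * x.2 = x.2 from by rw [h]; ring⟩
      all_goals rcases hall x.1 with h' | h' | h' | h'
      · exact ⟨1, show x.1 * x.1 = x.1 from by rw [h']; ring⟩
      · exact ⟨1, show x.1 * x.1 = x.1 from by rw [h']; ring⟩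
      · exact ⟨2, show x.1 = x.2 from by rw [h, h']⟩
      · exact ⟨3, show x.2 = x.1 * x.1 from by rw [h, h', hsq' ω hsq]⟩
      · exact ⟨1, show x.1 * x.1 = x.1 from by rw [h']; ring⟩
      · exact ⟨1, show x.1 * x.1 = x.1 from by rw [h']; ring⟩
      · exact ⟨3, show x.2 = x.1 * x.1 from by rw [h, h', hsq]⟩
      · exact ⟨2, show x.1 = x.2 from by rw [h, h']⟩
  · rintro ⟨c, hprop, hcov⟩
    obtain ⟨i1, hi1⟩ := hcov (((0 : F), ω) : K)
    obtain ⟨i2, hi2⟩ := hcov ((ω, (0 : F)) : K)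
    obtain ⟨i3, hi3⟩ := hcov ((ω, ω) : K)
    obtain ⟨i4, hi4⟩ := hcov ((ω, ω + 1) : K)
    have hne12 : i1 ≠ i2 := fun h => hprop i2 (P12 (c i2) (h ▸ hi1) hi2)
    have hne13 : i1 ≠ i3 := fun h => hprop i3 (P13 (c i3) (h ▸ hi1) hi3)
    have hne14 : i1 ≠ i4 := fun h => hprop i4 (P14 (c i4) (h ▸ hi1) hi4)
    have hne23 : i2 ≠ i3 := fun h => hprop i3 (P23 (c i3) (h ▸ hi2) hi3)
    have hne24 : i2 ≠ i4 := fun h => hprop i4 (P24 (c i4) (h ▸ hi2) hi4)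
    have hne34 : i3 ≠ i4 := fun h => hprop i4 (P34 (c i4) (h ▸ hi3) hi4)
    have v12 : i1.1 ≠ i2.1 := fun h => hne12 (Fin.ext h)
    have v13 : i1.1 ≠ i3.1 := fun h => hne13 (Fin.ext h)
    have v14 : i1.1 ≠ i4.1 := fun h => hne14 (Fin.ext h)
    have v23 : i2.1 ≠ i3.1 := fun h => hne23 (Fin.ext h)
    have v24 : i2.1 ≠ i4.1 := fun h => hne24 (Fin.ext h)
    have v34 : i3.1 ≠ i4.1 := fun h => hne34 (Fin.ext h)
    have b1 := i1.2
    have b2 := i2.2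
    have b3 := i3.2
    have b4 := i4.2
    omega
end

section
/- The covering number of the matrix ring M_2(F_2) is 4. -/
namespace M2F2Aux

abbrev R2' := Matrix (Fin 2) (Fin 2) (ZMod 2)
abbrev N16 := Fin 16

def bitZ (k : ℕ) : ZMod 2 := if k % 2 = 1 then 1 else 0
def decode (n : N16) : R2' := !![bitZ n.val, bitZ (n.val / 2); bitZ (n.val / 4), bitZ (n.val / 8)]
def encode (x : R2') : N16 :=
  ⟨(x 0 0).val % 2 + 2 * ((x 0 1).val % 2) + 4 * ((x 1 0).val % 2) + 8 * ((x 1 1).val % 2), by omega⟩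
def addN (a b : N16) : N16 := ⟨(a.val ^^^ b.val) % 16, by omega⟩
def mulN (a b : N16) : N16 :=
  let a0 := a.val % 2; let a1 := a.val / 2 % 2; let a2 := a.val / 4 % 2; let a3 := a.val / 8 % 2
  let b0 := b.val % 2; let b1 := b.val / 2 % 2; let b2 := b.val / 4 % 2; let b3 := b.val / 8 % 2
  ⟨(a0*b0 + a1*b2) % 2 + 2*((a0*b1 + a1*b3) % 2) + 4*((a2*b0 + a3*b2) % 2) + 8*((a2*b1 + a3*b3) % 2),
    by omega⟩

def F4N : Finset N16 := {0, 9, 14, 7}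
def b1N : Finset N16 := {0,1,2,3,8,9,10,11}
def b2N : Finset N16 := {0,1,4,5,8,9,12,13}
def b3N : Finset N16 := {0,3,5,6,9,10,12,15}
def stepN (s : Finset N16) : Finset N16 := s ∪ Finset.image₂ addN s s ∪ Finset.image₂ mulN s s

set_option maxHeartbeats 2000000 in
theorem bridge_add : ∀ a b : N16, decode a + decode b = decode (addN a b) := by decide

set_option maxHeartbeats 2000000 in
theorem bridge_mul : ∀ a b : N16, decode a * decode b = decode (mulN a b) := by decide

theorem decode_encode : ∀ x : R2', decode (encode x) = x := by decide
theorem encode_decode : ∀ n : N16, encode (decode n) = n := by decide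
theorem decode_zero : decode 0 = 0 := by decide
theorem addN_self : ∀ n : N16, addN n n = 0 := by decide

set_option maxRecDepth 100000 in
set_option maxHeartbeats 4000000 in
theorem keyN : ∀ x ∈ (F4Nᶜ : Finset N16), stepN (stepN (insert x F4N)) = Finset.univ := by decide

theorem encode_add (x y : R2') : encode (x + y) = addN (encode x) (encode y) := by
  have h : x + y = decode (addN (encode x) (encode y)) := by
    rw [← bridge_add, decode_encode, decode_encode]
  rw [h, encode_decode]

theorem encode_mul (x y : R2') : encode (x * y) = mulN (encode x) (encode y) := by
  have h : x * y = decode (mulN (encode x) (encode y)) := by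
    rw [← bridge_mul, decode_encode, decode_encode]
  rw [h, encode_decode]

theorem neg_eq_selfR (x : R2') : -x = x := by
  have h : x + x = 0 := by
    have := bridge_add (encode x) (encode x)
    rw [decode_encode, addN_self, decode_zero] at this
    exact this
  exact neg_eq_of_add_eq_zero_left h

theorem encode_zero : encode 0 = 0 := by decide

/-- Build a non-unital subring from a multiplicatively and additively closed
subset of `Fin 16`. -/
def mkSub (b : Finset N16) (h0 : (0 : N16) ∈ b)
    (hadd : ∀ m ∈ b, ∀ n ∈ b, addN m n ∈ b) (hmul : ∀ m ∈ b, ∀ n ∈ b, mulN m n ∈ b) :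
    NonUnitalSubring R2' where
  carrier := {x | encode x ∈ b}
  add_mem' := fun {x y} hx hy => by
    show encode (x + y) ∈ b
    rw [encode_add]; exact hadd _ hx _ hy
  mul_mem' := fun {x y} hx hy => by
    show encode (x * y) ∈ b
    rw [encode_mul]; exact hmul _ hx _ hy
  zero_mem' := by show encode 0 ∈ b; rw [encode_zero]; exact h0
  neg_mem' := fun {x} hx => by show encode (-x) ∈ b; rw [neg_eq_selfR]; exact hx

theorem mem_mkSub {b : Finset N16} {h0 hadd hmul} {x : R2'} :
    x ∈ mkSub b h0 hadd hmul ↔ encode x ∈ b := Iff.rfl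

theorem hA_mem {b : Finset N16} (h0 : (0 : N16) ∈ b)
    (hadd : ∀ m ∈ b, ∀ n ∈ b, addN m n ∈ b) (hmul : ∀ m ∈ b, ∀ n ∈ b, mulN m n ∈ b)
    {x : R2'} (h : encode x ∈ b) : x ∈ mkSub b h0 hadd hmul := h

theorem mkSub_ne_top (b : Finset N16) (h0 : (0 : N16) ∈ b)
    (hadd : ∀ m ∈ b, ∀ n ∈ b, addN m n ∈ b) (hmul : ∀ m ∈ b, ∀ n ∈ b, mulN m n ∈ b)
    (n : N16) (hn : n ∉ b) : mkSub b h0 hadd hmul ≠ ⊤ := by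
  intro h
  apply hn
  have : decode n ∈ mkSub b h0 hadd hmul := by rw [h]; trivial
  rw [mem_mkSub, encode_decode] at this
  exact this

theorem step_sound (S : NonUnitalSubring R2') (s : Finset N16)
    (h : ∀ n ∈ s, decode n ∈ S) : ∀ n ∈ stepN s, decode n ∈ S := by
  intro n hn
  simp only [stepN, Finset.mem_union, Finset.mem_image₂] at hn
  rcases hn with (hn | ⟨a, ha, b, hb, rfl⟩) | ⟨a, ha, b, hb, rfl⟩
  · exact h n hn
  · rw [← bridge_add]; exact S.add_mem (h a ha) (h b hb)
  · rw [← bridge_mul]; exact S.mul_mem (h a ha) (h b hb)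

/-- F₄ is a maximal subring: a subring containing `A = decode 14` and anything
outside F₄ is everything. -/
theorem L1 (S : NonUnitalSubring R2') (hA : decode 14 ∈ S) (x : R2') (hx : x ∈ S)
    (hxF : encode x ∉ F4N) : S = ⊤ := by
  have h7 : decode 7 ∈ S := by
    have := S.mul_mem hA hA
    rw [bridge_mul, (by decide : mulN 14 14 = 7)] at this
    exact this
  have h9 : decode 9 ∈ S := by
    have := S.mul_mem hA h7
    rw [bridge_mul, (by decide : mulN 14 7 = 9)] at this
    exact this
  have h0 : decode 0 ∈ S := by rw [decode_zero]; exact S.zero_mem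
  have hbase : ∀ n ∈ insert (encode x) F4N, decode n ∈ S := by
    intro n hn
    simp only [F4N, Finset.mem_insert, Finset.mem_singleton] at hn
    rcases hn with rfl | rfl | rfl | rfl | rfl
    · rw [decode_encode]; exact hx
    · exact h0
    · exact h9
    · exact hA
    · exact h7
  have h2 := step_sound S _ (step_sound S _ hbase)
  rw [NonUnitalSubring.eq_top_iff']
  intro y
  have hy : encode y ∈ stepN (stepN (insert (encode x) F4N)) := by
    rw [keyN (encode x) (Finset.mem_compl.2 hxF)]
    exact Finset.mem_univ _
  have := h2 _ hy
  rwa [decode_encode] at this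

theorem L1' (S : NonUnitalSubring R2') (hS : S ≠ ⊤) (hA : decode 14 ∈ S) :
    ∀ x ∈ S, encode x ∈ F4N := fun x hx =>
  by_contra fun h => hS (L1 S hA x hx h)

open scoped Classical in
noncomputable def fS (S : NonUnitalSubring R2') : Finset N16 :=
  Finset.univ.filter (fun n => decode n ∈ S)

theorem mem_fS {S : NonUnitalSubring R2'} {n : N16} : n ∈ fS S ↔ decode n ∈ S := by
  simp [fS]

theorem card_fS (S : NonUnitalSubring R2') : (fS S).card = Nat.card S := by
  classical
  have e : {n // n ∈ fS S} ≃ S :=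
    { toFun := fun n => ⟨decode n.1, mem_fS.1 n.2⟩
      invFun := fun x => ⟨encode x.1, mem_fS.2 (by rw [decode_encode]; exact x.2)⟩
      left_inv := fun n => Subtype.ext (encode_decode n.1)
      right_inv := fun x => Subtype.ext (decode_encode x.1) }
  rw [← Nat.card_congr e, Nat.card_eq_fintype_card, Fintype.card_coe]

theorem card_R2 : Nat.card R2' = 16 := by
  have e : R2' ≃ N16 :=
    { toFun := encode, invFun := decode, left_inv := decode_encode, right_inv := encode_decode }
  rw [Nat.card_congr e, Nat.card_eq_fintype_card, Fintype.card_fin]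

theorem card_fS_dvd (S : NonUnitalSubring R2') : (fS S).card ∣ 16 := by
  rw [card_fS]
  have h := S.toAddSubgroup.index_mul_card
  rw [card_R2] at h
  have hc : Nat.card S.toAddSubgroup = Nat.card S := rfl
  exact ⟨S.toAddSubgroup.index, by rw [← hc, mul_comm]; exact h.symm⟩

theorem fS_card_le8 (S : NonUnitalSubring R2') (hS : S ≠ ⊤) : (fS S).card ≤ 8 := by
  have hd := card_fS_dvd S
  have hne : (fS S).card ≠ 16 := by
    intro h
    apply hS
    have huniv : fS S = Finset.univ := Finset.eq_univ_of_card _ (by rw [h]; rfl)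
    rw [NonUnitalSubring.eq_top_iff']
    intro x
    have : encode x ∈ fS S := by rw [huniv]; exact Finset.mem_univ _
    rw [mem_fS, decode_encode] at this
    exact this
  have hle : (fS S).card ≤ 16 := Nat.le_of_dvd (by norm_num) hd
  interval_cases h : (fS S).card <;> omega

theorem zero_mem_fS (S : NonUnitalSubring R2') : (0 : N16) ∈ fS S :=
  mem_fS.2 (by rw [decode_zero]; exact S.zero_mem)

theorem union_big {S T : NonUnitalSubring R2'}
    (hcov : ∀ n : N16, n ∉ F4N → decode n ∈ S ∨ decode n ∈ T) :
    13 ≤ (fS S ∪ fS T).card := by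
  have hsub : insert (0 : N16) F4Nᶜ ⊆ fS S ∪ fS T := by
    intro n hn
    rcases Finset.mem_insert.1 hn with rfl | hn
    · exact Finset.mem_union_left _ (zero_mem_fS S)
    · rcases hcov n (Finset.mem_compl.1 hn) with h | h
      · exact Finset.mem_union_left _ (mem_fS.2 h)
      · exact Finset.mem_union_right _ (mem_fS.2 h)
  calc (13 : ℕ) = (insert (0 : N16) F4Nᶜ).card := by decide
    _ ≤ _ := Finset.card_le_card hsub

/-- One proper subring cannot cover the complement of F₄. -/
theorem single_cover (T : NonUnitalSubring R2') (hT : T ≠ ⊤)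
    (hcov : ∀ n : N16, n ∉ F4N → decode n ∈ T) : False := by
  have h13 : 13 ≤ (fS T ∪ fS T).card :=
    union_big (S := T) (T := T) (fun n hn => Or.inl (hcov n hn))
  rw [Finset.union_self] at h13
  have := fS_card_le8 T hT
  omega

theorem card_inter (S T : NonUnitalSubring R2') :
    (fS S ∩ fS T).card = Nat.card ↥(S.toAddSubgroup ⊓ T.toAddSubgroup) := by
  classical
  have e : {n // n ∈ fS S ∩ fS T} ≃ ↥(S.toAddSubgroup ⊓ T.toAddSubgroup) :=
    { toFun := fun n => ⟨decode n.1, by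
        have h := Finset.mem_inter.1 n.2
        exact AddSubgroup.mem_inf.2 ⟨mem_fS.1 h.1, mem_fS.1 h.2⟩⟩
      invFun := fun x => ⟨encode x.1, by
        have h := AddSubgroup.mem_inf.1 x.2
        refine Finset.mem_inter.2 ⟨mem_fS.2 ?_, mem_fS.2 ?_⟩ <;>
          rw [decode_encode]
        · exact h.1
        · exact h.2⟩
      left_inv := fun n => Subtype.ext (encode_decode n.1)
      right_inv := fun x => Subtype.ext (decode_encode x.1) }
  rw [← Nat.card_congr e, Nat.card_eq_fintype_card, Fintype.card_coe]

/-- Two proper subrings cannot cover the complement of F₄. -/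
theorem main2 (S T : NonUnitalSubring R2') (hS : S ≠ ⊤) (hT : T ≠ ⊤)
    (hcov : ∀ n : N16, n ∉ F4N → decode n ∈ S ∨ decode n ∈ T) : False := by
  by_cases hAS : decode 14 ∈ S
  · refine single_cover T hT (fun n hn => ?_)
    rcases hcov n hn with h | h
    · exact absurd (by rw [← encode_decode n]; exact L1' S hS hAS _ h) hn
    · exact h
  by_cases hAT : decode 14 ∈ T
  · refine single_cover S hS (fun n hn => ?_)
    rcases hcov n hn with h | h
    · exact h
    · exact absurd (by rw [← encode_decode n]; exact L1' T hT hAT _ h) hn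
  -- both avoid A
  have h13 : 13 ≤ (fS S ∪ fS T).card := union_big hcov
  have hSle := fS_card_le8 S hS
  have hTle := fS_card_le8 T hT
  have hUI : (fS S ∪ fS T).card + (fS S ∩ fS T).card = (fS S).card + (fS T).card :=
    Finset.card_union_add_card_inter _ _
  have hS8 : (fS S).card = 8 := by
    have := card_fS_dvd S
    have h1 : 1 ≤ (fS S ∩ fS T).card :=
      Finset.card_pos.2 ⟨0, Finset.mem_inter.2 ⟨zero_mem_fS S, zero_mem_fS T⟩⟩
    interval_cases h : (fS S).card <;> omega
  have hT8 : (fS T).card = 8 := by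
    have := card_fS_dvd T
    have h1 : 1 ≤ (fS S ∩ fS T).card :=
      Finset.card_pos.2 ⟨0, Finset.mem_inter.2 ⟨zero_mem_fS S, zero_mem_fS T⟩⟩
    interval_cases h : (fS T).card <;> omega
  -- index computation
  have hic := card_inter S T
  have hHc : Nat.card S.toAddSubgroup = 8 := by
    have : Nat.card S.toAddSubgroup = Nat.card S := rfl
    rw [this, ← card_fS, hS8]
  have hKc : Nat.card T.toAddSubgroup = 8 := by
    have : Nat.card T.toAddSubgroup = Nat.card T := rfl
    rw [this, ← card_fS, hT8]
  have hHi : S.toAddSubgroup.index = 2 := by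
    have h := S.toAddSubgroup.index_mul_card
    rw [card_R2, hHc] at h
    omega
  have hKi : T.toAddSubgroup.index = 2 := by
    have h := T.toAddSubgroup.index_mul_card
    rw [card_R2, hKc] at h
    omega
  have hinf : (S.toAddSubgroup ⊓ T.toAddSubgroup).index ≤ 4 := by
    have := AddSubgroup.index_inf_le (H := S.toAddSubgroup) (K := T.toAddSubgroup)
    rw [hHi, hKi] at this
    omega
  have hinfc : 4 ≤ Nat.card ↥(S.toAddSubgroup ⊓ T.toAddSubgroup) := by
    have h := (S.toAddSubgroup ⊓ T.toAddSubgroup).index_mul_card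
    rw [card_R2] at h
    interval_cases hi : (S.toAddSubgroup ⊓ T.toAddSubgroup).index <;> omega
  omega

theorem coverN : ∀ n : N16, n ∈ b1N ∨ n ∈ b2N ∨ n ∈ b3N ∨ n ∈ F4N := by decide

theorem b1_zero : (0 : N16) ∈ b1N := by decide
theorem b1_add : ∀ m ∈ b1N, ∀ n ∈ b1N, addN m n ∈ b1N := by decide
theorem b1_mul : ∀ m ∈ b1N, ∀ n ∈ b1N, mulN m n ∈ b1N := by decide
theorem b2_zero : (0 : N16) ∈ b2N := by decide
theorem b2_add : ∀ m ∈ b2N, ∀ n ∈ b2N, addN m n ∈ b2N := by decide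
theorem b2_mul : ∀ m ∈ b2N, ∀ n ∈ b2N, mulN m n ∈ b2N := by decide
theorem b3_zero : (0 : N16) ∈ b3N := by decide
theorem b3_add : ∀ m ∈ b3N, ∀ n ∈ b3N, addN m n ∈ b3N := by decide
theorem b3_mul : ∀ m ∈ b3N, ∀ n ∈ b3N, mulN m n ∈ b3N := by decide
theorem f4_zero : (0 : N16) ∈ F4N := by decide
theorem f4_add : ∀ m ∈ F4N, ∀ n ∈ F4N, addN m n ∈ F4N := by decide
theorem f4_mul : ∀ m ∈ F4N, ∀ n ∈ F4N, mulN m n ∈ F4N := by decide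
def B1 : NonUnitalSubring R2' := mkSub b1N b1_zero b1_add b1_mul
def B2 : NonUnitalSubring R2' := mkSub b2N b2_zero b2_add b2_mul
def B3 : NonUnitalSubring R2' := mkSub b3N b3_zero b3_add b3_mul
def B4 : NonUnitalSubring R2' := mkSub F4N f4_zero f4_add f4_mul

end M2F2Aux

open M2F2Aux in
/-- The covering number of `M₂(F₂)` is 4. -/
theorem covering_number_M2F2_eq_four :
    CoversWith (Matrix (Fin 2) (Fin 2) (ZMod 2)) 4 ∧
    ¬ CoversWith (Matrix (Fin 2) (Fin 2) (ZMod 2)) 3 := by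
  constructor
  · refine ⟨![B1, B2, B3, B4], fun i => ?_, fun x => ?_⟩
    · fin_cases i
      · exact mkSub_ne_top b1N b1_zero b1_add b1_mul 4 (by decide)
      · exact mkSub_ne_top b2N b2_zero b2_add b2_mul 2 (by decide)
      · exact mkSub_ne_top b3N b3_zero b3_add b3_mul 1 (by decide)
      · exact mkSub_ne_top F4N f4_zero f4_add f4_mul 1 (by decide)
    · rcases coverN (encode x) with h | h | h | h
      · exact ⟨0, hA_mem b1_zero b1_add b1_mul h⟩
      · exact ⟨1, hA_mem b2_zero b2_add b2_mul h⟩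
      · exact ⟨2, hA_mem b3_zero b3_add b3_mul h⟩
      · exact ⟨3, hA_mem f4_zero f4_add f4_mul h⟩
  · rintro ⟨c, hproper, hcover⟩
    obtain ⟨i, hAi⟩ := hcover (decode 14)
    have hF : ∀ x ∈ c i, encode x ∈ F4N := L1' (c i) (hproper i) hAi
    have hcov' : ∀ j k : Fin 3, j ≠ i → k ≠ i → (∀ m : Fin 3, m = i ∨ m = j ∨ m = k) →
        False := by
      intro j k hj hk hall
      refine main2 (c j) (c k) (hproper j) (hproper k) (fun n hn => ?_)
      obtain ⟨m, hm⟩ := hcover (decode n)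
      rcases hall m with rfl | rfl | rfl
      · exact absurd (by rw [← encode_decode n]; exact hF _ hm) hn
      · exact Or.inl hm
      · exact Or.inr hm
    fin_cases i
    · exact hcov' 1 2 (by decide) (by decide) (by decide)
    · exact hcov' 0 2 (by decide) (by decide) (by decide)
    · exact hcov' 0 1 (by decide) (by decide) (by decide)
end

section
/- The matrix ring M_2(F_2) has exactly four maximal subrings: the unique subring isomorphic to F_4, and the three stabilizers of the lines in F_2 × F_2 (i.e., for each one-dimensional subspace L of F_2², the set of matrices A with A·L ⊆ L). -/
set_option linter.unusedVariables false
set_option maxHeartbeats 4000000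
set_option synthInstance.maxSize 4000
set_option synthInstance.maxHeartbeats 2000000

namespace M2F2Aux

abbrev R := Matrix (Fin 2) (Fin 2) (ZMod 2)
abbrev V := Bool × Bool × Bool × Bool

def addV : V → V → V := fun x y =>
  (xor x.1 y.1, xor x.2.1 y.2.1, xor x.2.2.1 y.2.2.1, xor x.2.2.2 y.2.2.2)
def mulV : V → V → V := fun x y =>
  (xor (x.1 && y.1) (x.2.1 && y.2.2.1), xor (x.1 && y.2.1) (x.2.1 && y.2.2.2),
   xor (x.2.2.1 && y.1) (x.2.2.2 && y.2.2.1), xor (x.2.2.1 && y.2.1) (x.2.2.2 && y.2.2.2))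
def beqV : V → V → Bool := fun x y =>
  (x.1 == y.1) && (x.2.1 == y.2.1) && (x.2.2.1 == y.2.2.1) && (x.2.2.2 == y.2.2.2)

abbrev zV : V := (false, false, false, false)
abbrev oneV : V := (true, false, false, true)
abbrev aV : V := (false, true, true, true)
abbrev a1V : V := (true, true, true, false)
abbrev e00V : V := (true,false,false,false)
abbrev e01V : V := (false,true,false,false)
abbrev e10V : V := (false,false,true,false)
abbrev e11V : V := (false,false,false,true)
abbrev u2V : V := (true,true,false,false)
abbrev v2V : V := (true,false,true,false)

def s8 (a b c x : V) : Bool :=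
  beqV x zV || beqV x a || beqV x b || beqV x c || beqV x (addV a b) ||
    beqV x (addV a c) || beqV x (addV b c) || beqV x (addV (addV a b) c)
def fV (v : V) : Bool := beqV v zV || beqV v oneV || beqV v aV || beqV v a1V
def b0V (v : V) : Bool := !v.2.2.1
def b1V (v : V) : Bool := !v.2.1
def b2V (v : V) : Bool := !(xor v.1 (xor v.2.1 (xor v.2.2.1 v.2.2.2)))

def univV : List V := [
 (false,false,false,false),(false,false,false,true),(false,false,true,false),(false,false,true,true),
 (false,true,false,false),(false,true,false,true),(false,true,true,false),(false,true,true,true),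
 (true,false,false,false),(true,false,false,true),(true,false,true,false),(true,false,true,true),
 (true,true,false,false),(true,true,false,true),(true,true,true,false),(true,true,true,true)]

lemma beqV_iff : ∀ u v : V, beqV u v = true ↔ u = v := by
  rintro ⟨a, b, c, d⟩ ⟨e, f, g, h⟩
  simp [beqV, Prod.ext_iff, and_assoc]

lemma mem_univV : ∀ v : V, v ∈ univV := by decide

/-- The main combinatorial check. -/
def d1check : Bool := univV.all fun a => univV.all fun b => univV.all fun c =>
  !(s8 a b c (mulV a a) && s8 a b c (mulV a b) && s8 a b c (mulV a c) &&
    s8 a b c (mulV b a) && s8 a b c (mulV b b) && s8 a b c (mulV b c) &&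
    s8 a b c (mulV c a) && s8 a b c (mulV c b) && s8 a b c (mulV c c)) ||
  (univV.all (fun x => !(s8 a b c x) || fV x) || univV.all (fun x => !(s8 a b c x) || b0V x) ||
   univV.all (fun x => !(s8 a b c x) || b1V x) || univV.all (fun x => !(s8 a b c x) || b2V x))

theorem d1check_true : d1check = true := by rfl

lemma allImp {p q : M2F2Aux.V → Bool} (H : univV.all (fun x => !(p x) || q x) = true) :
    ∀ x, p x = true → q x = true := by
  rw [List.all_eq_true] at H
  intro x hx
  have h' := H x (mem_univV x)
  simp only [Bool.or_eq_true] at h'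
  rcases h' with h | h
  · rw [Bool.not_eq_true'] at h; rw [hx] at h; cases h
  · exact h

lemma d1V (a b c : V)
    (h1 : s8 a b c (mulV a a) = true) (h2 : s8 a b c (mulV a b) = true)
    (h3 : s8 a b c (mulV a c) = true) (h4 : s8 a b c (mulV b a) = true)
    (h5 : s8 a b c (mulV b b) = true) (h6 : s8 a b c (mulV b c) = true)
    (h7 : s8 a b c (mulV c a) = true) (h8 : s8 a b c (mulV c b) = true)
    (h9 : s8 a b c (mulV c c) = true) :
    (∀ x, s8 a b c x = true → fV x = true) ∨ (∀ x, s8 a b c x = true → b0V x = true) ∨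
    (∀ x, s8 a b c x = true → b1V x = true) ∨ (∀ x, s8 a b c x = true → b2V x = true) := by
  have H0 : d1check = true := d1check_true
  unfold d1check at H0
  rw [List.all_eq_true] at H0
  have H1 := H0 a (mem_univV a)
  rw [List.all_eq_true] at H1
  have H2 := H1 b (mem_univV b)
  rw [List.all_eq_true] at H2
  have H3 := H2 c (mem_univV c)
  have hX : (s8 a b c (mulV a a) && s8 a b c (mulV a b) && s8 a b c (mulV a c) &&
      s8 a b c (mulV b a) && s8 a b c (mulV b b) && s8 a b c (mulV b c) &&
      s8 a b c (mulV c a) && s8 a b c (mulV c b) && s8 a b c (mulV c c)) = true := by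
    rw [h1, h2, h3, h4, h5, h6, h7, h8, h9]; rfl
  rw [hX, Bool.not_true, Bool.false_or] at H3
  simp only [Bool.or_eq_true] at H3
  rcases H3 with ((H | H) | H) | H
  · exact Or.inl (allImp H)
  · exact Or.inr (Or.inl (allImp H))
  · exact Or.inr (Or.inr (Or.inl (allImp H)))
  · exact Or.inr (Or.inr (Or.inr (allImp H)))

-- other small V-level facts
lemma LFV : ∀ x : V, fV x = false → ∀ y : V,
    ∃ f g : V, fV f = true ∧ fV g = true ∧ y = addV f (mulV g x) := by decide
lemma m20 : ∀ x : V, b0V x = false → mulV (mulV e11V x) e00V = e10V := by decide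
lemma m21 : ∀ x : V, b1V x = false → mulV (mulV e00V x) e11V = e01V := by decide
lemma m22 : ∀ x : V, b2V x = false → mulV (mulV u2V x) v2V = e00V := by decide
lemma cov0 : ∀ y : V, ∃ b : V, b0V b = true ∧ (y = b ∨ y = addV b e10V) := by decide
lemma cov1 : ∀ y : V, ∃ b : V, b1V b = true ∧ (y = b ∨ y = addV b e01V) := by decide
lemma cov2 : ∀ y : V, ∃ b : V, b2V b = true ∧ (y = b ∨ y = addV b e00V) := by decide
lemma d4V : ∀ e a : V, mulV e e = e → mulV e a = a → mulV a e = a →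
    addV (addV (mulV a a) a) e = zV → e ≠ zV → a ≠ zV → a ≠ e →
    e = oneV ∧ (a = aV ∨ a = a1V) := by decide



-- # R-layer
def z (b : Bool) : ZMod 2 := if b then 1 else 0
def phi : V → R := fun v => !![z v.1, z v.2.1; z v.2.2.1, z v.2.2.2]

lemma hadd : ∀ u v : V, phi (addV u v) = phi u + phi v := by decide
lemma hmul : ∀ u v : V, phi (mulV u v) = phi u * phi v := by decide
lemma phieq : ∀ u v : V, phi u = phi v ↔ u = v := by decide
lemma hsurj : ∀ r : R, ∃ v : V, phi v = r := by decide
lemma hzero : phi zV = 0 := by decide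
lemma hone : phi oneV = 1 := by decide

def Amat : R := !![0,1;1,1]

lemma hAmat : phi aV = Amat := by decide
lemma hA1mat : phi a1V = 1 + Amat := by decide

abbrev PF (x : R) : Prop := x = 0 ∨ x = 1 ∨ x = Amat ∨ x = 1 + Amat
abbrev PB0 (x : R) : Prop := x 1 0 = 0
abbrev PB1 (x : R) : Prop := x 0 1 = 0
abbrev PB2 (x : R) : Prop := x 0 0 + x 0 1 + x 1 0 + x 1 1 = 0

lemma tF : ∀ v : V, fV v = true ↔ PF (phi v) := by decide
lemma tB0 : ∀ v : V, b0V v = true ↔ PB0 (phi v) := by decide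
lemma tB1 : ∀ v : V, b1V v = true ↔ PB1 (phi v) := by decide
lemma tB2 : ∀ v : V, b2V v = true ↔ PB2 (phi v) := by decide

abbrev S8R (a b c x : R) : Prop :=
  x = 0 ∨ x = a ∨ x = b ∨ x = c ∨ x = a + b ∨ x = a + c ∨ x = b + c ∨ x = a + b + c

lemma tS8 (va vb vc vx : V) :
    S8R (phi va) (phi vb) (phi vc) (phi vx) ↔ s8 va vb vc vx = true := by
  unfold S8R s8
  rw [← hzero, ← hadd va vb, ← hadd va vc, ← hadd vb vc, ← hadd (addV va vb) vc]
  simp only [Bool.or_eq_true, beqV_iff, phieq, or_assoc]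

-- closure facts
lemma cF0 : PF (0 : R) := by decide
lemma cFadd : ∀ x y : R, PF x → PF y → PF (x + y) := by decide
lemma cFmul : ∀ x y : R, PF x → PF y → PF (x * y) := by decide
lemma cFneg : ∀ x : R, PF x → PF (-x) := by decide
lemma cB00 : PB0 (0 : R) := by decide
lemma cB0add : ∀ x y : R, PB0 x → PB0 y → PB0 (x + y) := by decide
lemma cB0mul : ∀ x y : R, PB0 x → PB0 y → PB0 (x * y) := by decide
lemma cB0neg : ∀ x : R, PB0 x → PB0 (-x) := by decide
lemma cB10 : PB1 (0 : R) := by decide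
lemma cB1add : ∀ x y : R, PB1 x → PB1 y → PB1 (x + y) := by decide
lemma cB1mul : ∀ x y : R, PB1 x → PB1 y → PB1 (x * y) := by decide
lemma cB1neg : ∀ x : R, PB1 x → PB1 (-x) := by decide
lemma cB20 : PB2 (0 : R) := by decide
lemma cB2add : ∀ x y : R, PB2 x → PB2 y → PB2 (x + y) := by decide
lemma cB2mul : ∀ x y : R, PB2 x → PB2 y → PB2 (x * y) := by decide
lemma cB2neg : ∀ x : R, PB2 x → PB2 (-x) := by decide

def FR : NonUnitalSubring R where
  carrier := {x | PF x}
  zero_mem' := cF0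
  add_mem' := fun {a b} ha hb => cFadd a b ha hb
  mul_mem' := fun {a b} ha hb => cFmul a b ha hb
  neg_mem' := fun {a} ha => cFneg a ha

def B0R : NonUnitalSubring R where
  carrier := {x | PB0 x}
  zero_mem' := cB00
  add_mem' := fun {a b} ha hb => cB0add a b ha hb
  mul_mem' := fun {a b} ha hb => cB0mul a b ha hb
  neg_mem' := fun {a} ha => cB0neg a ha

def B1R : NonUnitalSubring R where
  carrier := {x | PB1 x}
  zero_mem' := cB10
  add_mem' := fun {a b} ha hb => cB1add a b ha hb
  mul_mem' := fun {a b} ha hb => cB1mul a b ha hb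
  neg_mem' := fun {a} ha => cB1neg a ha

def B2R : NonUnitalSubring R where
  carrier := {x | PB2 x}
  zero_mem' := cB20
  add_mem' := fun {a b} ha hb => cB2add a b ha hb
  mul_mem' := fun {a b} ha hb => cB2mul a b ha hb
  neg_mem' := fun {a} ha => cB2neg a ha

lemma mem_FR {x : R} : x ∈ FR ↔ PF x := Iff.rfl
lemma mem_B0R {x : R} : x ∈ B0R ↔ PB0 x := Iff.rfl
lemma mem_B1R {x : R} : x ∈ B1R ↔ PB1 x := Iff.rfl
lemma mem_B2R {x : R} : x ∈ B2R ↔ PB2 x := Iff.rfl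

lemma d1R (a b c : R)
    (h1 : S8R a b c (a*a)) (h2 : S8R a b c (a*b)) (h3 : S8R a b c (a*c))
    (h4 : S8R a b c (b*a)) (h5 : S8R a b c (b*b)) (h6 : S8R a b c (b*c))
    (h7 : S8R a b c (c*a)) (h8 : S8R a b c (c*b)) (h9 : S8R a b c (c*c)) :
    (∀ x, S8R a b c x → PF x) ∨ (∀ x, S8R a b c x → PB0 x) ∨
    (∀ x, S8R a b c x → PB1 x) ∨ (∀ x, S8R a b c x → PB2 x) := by
  obtain ⟨va, rfl⟩ := hsurj a
  obtain ⟨vb, rfl⟩ := hsurj b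
  obtain ⟨vc, rfl⟩ := hsurj c
  rw [← hmul, tS8] at h1 h2 h3 h4 h5 h6 h7 h8 h9
  rcases d1V va vb vc h1 h2 h3 h4 h5 h6 h7 h8 h9 with H | H | H | H
  · left
    intro x hx
    obtain ⟨vx, rfl⟩ := hsurj x
    exact (tF vx).mp (H vx ((tS8 va vb vc vx).mp hx))
  · right; left
    intro x hx
    obtain ⟨vx, rfl⟩ := hsurj x
    exact (tB0 vx).mp (H vx ((tS8 va vb vc vx).mp hx))
  · right; right; left
    intro x hx
    obtain ⟨vx, rfl⟩ := hsurj x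
    exact (tB1 vx).mp (H vx ((tS8 va vb vc vx).mp hx))
  · right; right; right
    intro x hx
    obtain ⟨vx, rfl⟩ := hsurj x
    exact (tB2 vx).mp (H vx ((tS8 va vb vc vx).mp hx))

lemma zmod2cases : ∀ r : ZMod 2, r = 0 ∨ r = 1 := by decide

open Module Submodule in
lemma mem_span_triple {a b c x : R} (h : x ∈ Submodule.span (ZMod 2) {a, b, c}) :
    S8R a b c x := by
  rw [Submodule.mem_span_insert] at h
  obtain ⟨s, y, hy, rfl⟩ := h
  rw [Submodule.mem_span_insert] at hy
  obtain ⟨t, w, hw, rfl⟩ := hy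
  rw [Submodule.mem_span_singleton] at hw
  obtain ⟨u, rfl⟩ := hw
  have hs := zmod2cases s
  have ht := zmod2cases t
  have hu := zmod2cases u
  unfold S8R
  rcases hs with rfl | rfl <;> rcases ht with rfl | rfl <;> rcases hu with rfl | rfl <;>
    simp only [zero_smul, one_smul, zero_add, add_zero, ← add_assoc] <;> tauto

open Module Submodule in
lemma proper_sub (M : NonUnitalSubring R) (hM : M ≠ ⊤) :
    (∀ x ∈ M, PF x) ∨ (∀ x ∈ M, PB0 x) ∨ (∀ x ∈ M, PB1 x) ∨ (∀ x ∈ M, PB2 x) := by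
  classical
  let W : Submodule (ZMod 2) R := AddSubgroup.toZModSubmodule 2 M.toAddSubgroup
  have hmem : ∀ x : R, x ∈ W ↔ x ∈ M := fun x => Iff.rfl
  have hRrank : finrank (ZMod 2) R = 4 := by
    rw [Module.finrank_matrix, Module.finrank_self]
    simp
  have hW3 : finrank (ZMod 2) W ≤ 3 := by
    by_contra h
    push_neg at h
    have h4 : finrank (ZMod 2) W = 4 := le_antisymm (hRrank ▸ W.finrank_le) h
    have htop : W = ⊤ := Submodule.eq_top_of_finrank_eq (by rw [h4, hRrank])
    apply hM
    apply SetLike.ext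
    intro x
    simp only [NonUnitalSubring.mem_top, iff_true]
    exact (hmem x).mp (htop ▸ Submodule.mem_top)
  let bW := Module.finBasis (ZMod 2) W
  let g : Fin 3 → R := fun i =>
    if h : (i : ℕ) < finrank (ZMod 2) W then (bW ⟨i, h⟩ : R) else 0
  have hgM : ∀ i, g i ∈ M := by
    intro i
    simp only [g]
    split
    · exact (hmem _).mp (SetLike.coe_mem _)
    · exact M.zero_mem
  have hspan : ∀ x ∈ M, S8R (g 0) (g 1) (g 2) x := by
    intro x hx
    apply mem_span_triple
    have hx' : (⟨x, (hmem x).mpr hx⟩ : W) ∈ Submodule.span (ZMod 2) (Set.range ⇑bW) := by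
      rw [bW.span_eq]; trivial
    have hx2 : x ∈ Submodule.span (ZMod 2) (W.subtype '' Set.range ⇑bW) := by
      rw [← Submodule.map_span]
      exact ⟨_, hx', rfl⟩
    have himg : W.subtype '' Set.range ⇑bW ⊆ {g 0, g 1, g 2} := by
      rintro _ ⟨_, ⟨i, rfl⟩, rfl⟩
      have hi : (i : ℕ) < finrank (ZMod 2) W := i.2
      have hi3 : (i : ℕ) < 3 := lt_of_lt_of_le hi hW3
      have hgi : W.subtype (bW i) = g ⟨i, hi3⟩ := by
        simp only [g]
        rw [dif_pos hi]
        congr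
      rw [hgi]
      have : (⟨i, hi3⟩ : Fin 3) = 0 ∨ (⟨i, hi3⟩ : Fin 3) = 1 ∨ (⟨i, hi3⟩ : Fin 3) = 2 := by
        rcases i with ⟨iv, hiv⟩
        interval_cases iv <;> simp
      rcases this with h | h | h <;> rw [h] <;> simp
    exact Submodule.span_mono himg hx2
  have hp : ∀ i j, S8R (g 0) (g 1) (g 2) (g i * g j) :=
    fun i j => hspan _ (M.mul_mem (hgM i) (hgM j))
  rcases d1R (g 0) (g 1) (g 2) (hp 0 0) (hp 0 1) (hp 0 2) (hp 1 0) (hp 1 1) (hp 1 2)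
      (hp 2 0) (hp 2 1) (hp 2 2) with H | H | H | H
  · exact Or.inl fun x hx => H x (hspan x hx)
  · exact Or.inr (Or.inl fun x hx => H x (hspan x hx))
  · exact Or.inr (Or.inr (Or.inl fun x hx => H x (hspan x hx)))
  · exact Or.inr (Or.inr (Or.inr fun x hx => H x (hspan x hx)))

-- # Maximality helpers

lemma maxF (N : NonUnitalSubring R) (hsub : ∀ y, PF y → y ∈ N) {x : R} (hxN : x ∈ N)
    (hxF : ¬ PF x) : ∀ y : R, y ∈ N := by
  obtain ⟨vx, rfl⟩ := hsurj x
  intro y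
  obtain ⟨vy, rfl⟩ := hsurj y
  have hx' : fV vx = false := by
    cases hb : fV vx
    · rfl
    · exact absurd ((tF vx).mp hb) hxF
  obtain ⟨f', g', hf, hg, hy⟩ := LFV vx hx' vy
  rw [hy, hadd, hmul]
  exact N.add_mem (hsub _ ((tF f').mp hf)) (N.mul_mem (hsub _ ((tF g').mp hg)) hxN)

lemma maxB0 (N : NonUnitalSubring R) (hsub : ∀ y, PB0 y → y ∈ N) {x : R} (hxN : x ∈ N)
    (hxB : ¬ PB0 x) : ∀ y : R, y ∈ N := by
  obtain ⟨vx, rfl⟩ := hsurj x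
  have hx' : b0V vx = false := by
    cases hb : b0V vx
    · rfl
    · exact absurd ((tB0 vx).mp hb) hxB
  have hE : phi e10V ∈ N := by
    have h2 := m20 vx hx'
    have h3 : phi e10V = phi e11V * phi vx * phi e00V := by rw [← h2, hmul, hmul]
    rw [h3]
    exact N.mul_mem (N.mul_mem (hsub _ (by decide)) hxN) (hsub _ (by decide))
  intro y
  obtain ⟨vy, rfl⟩ := hsurj y
  obtain ⟨b, hb, hcase⟩ := cov0 vy
  rcases hcase with rfl | rfl
  · exact hsub _ ((tB0 _).mp hb)
  · rw [hadd]
    exact N.add_mem (hsub _ ((tB0 _).mp hb)) hE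

lemma maxB1 (N : NonUnitalSubring R) (hsub : ∀ y, PB1 y → y ∈ N) {x : R} (hxN : x ∈ N)
    (hxB : ¬ PB1 x) : ∀ y : R, y ∈ N := by
  obtain ⟨vx, rfl⟩ := hsurj x
  have hx' : b1V vx = false := by
    cases hb : b1V vx
    · rfl
    · exact absurd ((tB1 vx).mp hb) hxB
  have hE : phi e01V ∈ N := by
    have h2 := m21 vx hx'
    have h3 : phi e01V = phi e00V * phi vx * phi e11V := by rw [← h2, hmul, hmul]
    rw [h3]
    exact N.mul_mem (N.mul_mem (hsub _ (by decide)) hxN) (hsub _ (by decide))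
  intro y
  obtain ⟨vy, rfl⟩ := hsurj y
  obtain ⟨b, hb, hcase⟩ := cov1 vy
  rcases hcase with rfl | rfl
  · exact hsub _ ((tB1 _).mp hb)
  · rw [hadd]
    exact N.add_mem (hsub _ ((tB1 _).mp hb)) hE

lemma maxB2 (N : NonUnitalSubring R) (hsub : ∀ y, PB2 y → y ∈ N) {x : R} (hxN : x ∈ N)
    (hxB : ¬ PB2 x) : ∀ y : R, y ∈ N := by
  obtain ⟨vx, rfl⟩ := hsurj x
  have hx' : b2V vx = false := by
    cases hb : b2V vx
    · rfl
    · exact absurd ((tB2 vx).mp hb) hxB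
  have hE : phi e00V ∈ N := by
    have h2 := m22 vx hx'
    have h3 : phi e00V = phi u2V * phi vx * phi v2V := by rw [← h2, hmul, hmul]
    rw [h3]
    exact N.mul_mem (N.mul_mem (hsub _ (by decide)) hxN) (hsub _ (by decide))
  intro y
  obtain ⟨vy, rfl⟩ := hsurj y
  obtain ⟨b, hb, hcase⟩ := cov2 vy
  rcases hcase with rfl | rfl
  · exact hsub _ ((tB2 _).mp hb)
  · rw [hadd]
    exact N.add_mem (hsub _ ((tB2 _).mp hb)) hE

-- properness
lemma FRne : FR ≠ ⊤ := by
  intro h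
  have hm : (!![0,0;1,0] : R) ∈ FR := by rw [h]; trivial
  exact (by decide : ¬ PF (!![0,0;1,0] : R)) hm

lemma B0Rne : B0R ≠ ⊤ := by
  intro h
  have hm : (!![0,0;1,0] : R) ∈ B0R := by rw [h]; trivial
  exact (by decide : ¬ PB0 (!![0,0;1,0] : R)) hm

lemma B1Rne : B1R ≠ ⊤ := by
  intro h
  have hm : (!![0,1;0,0] : R) ∈ B1R := by rw [h]; trivial
  exact (by decide : ¬ PB1 (!![0,1;0,0] : R)) hm

lemma B2Rne : B2R ≠ ⊤ := by
  intro h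
  have hm : (!![1,0;0,0] : R) ∈ B2R := by rw [h]; trivial
  exact (by decide : ¬ PB2 (!![1,0;0,0] : R)) hm

lemma FR_max : ∀ N, FR < N → N = ⊤ := by
  intro N hN
  obtain ⟨x, hxN, hxF⟩ := SetLike.exists_of_lt hN
  have h := maxF N (fun y hy => hN.le hy) hxN hxF
  exact SetLike.ext fun y => ⟨fun _ => trivial, fun _ => h y⟩

lemma B0R_max : ∀ N, B0R < N → N = ⊤ := by
  intro N hN
  obtain ⟨x, hxN, hxB⟩ := SetLike.exists_of_lt hN
  have h := maxB0 N (fun y hy => hN.le hy) hxN hxB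
  exact SetLike.ext fun y => ⟨fun _ => trivial, fun _ => h y⟩

lemma B1R_max : ∀ N, B1R < N → N = ⊤ := by
  intro N hN
  obtain ⟨x, hxN, hxB⟩ := SetLike.exists_of_lt hN
  have h := maxB1 N (fun y hy => hN.le hy) hxN hxB
  exact SetLike.ext fun y => ⟨fun _ => trivial, fun _ => h y⟩

lemma B2R_max : ∀ N, B2R < N → N = ⊤ := by
  intro N hN
  obtain ⟨x, hxN, hxB⟩ := SetLike.exists_of_lt hN
  have h := maxB2 N (fun y hy => hN.le hy) hxN hxB
  exact SetLike.ext fun y => ⟨fun _ => trivial, fun _ => h y⟩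

-- # The field F4 inside R

def Fsub : Subring R where
  carrier := {x | PF x}
  zero_mem' := cF0
  one_mem' := Or.inr (Or.inl rfl)
  add_mem' := fun {a b} ha hb => cFadd a b ha hb
  mul_mem' := fun {a b} ha hb => cFmul a b ha hb
  neg_mem' := fun {a} ha => cFneg a ha

lemma Ffin_iff : ∀ x : R, x ∈ ({0, 1, Amat, 1 + Amat} : Finset R) ↔ PF x := by decide

noncomputable instance : Fintype ↥Fsub :=
  Fintype.ofFinset ({0, 1, Amat, 1 + Amat} : Finset R) (fun x => Ffin_iff x)

lemma FsubSet : (Fsub : Set R) = ↑({0, 1, Amat, 1 + Amat} : Finset R) := by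
  ext x
  rw [Finset.mem_coe, Ffin_iff]
  rfl

lemma cardFsub : Nat.card ↥Fsub = 4 := by
  have h0 : Nat.card ↥Fsub = ((Fsub : Set R)).ncard := Nat.card_coe_set_eq _
  rw [h0, FsubSet, Set.ncard_coe_finset]
  decide

lemma cFcomm : ∀ x y : R, PF x → PF y → x * y = y * x := by decide
lemma cFnzd : ∀ x y : R, PF x → PF y → x * y = 0 → x = 0 ∨ y = 0 := by decide

noncomputable instance fieldFsub : Field ↥Fsub := by
  letI : CommRing ↥Fsub :=
    { (inferInstance : Ring ↥Fsub) with
      mul_comm := fun x y => Subtype.ext (cFcomm x.1 y.1 x.2 y.2) }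
  haveI : NoZeroDivisors ↥Fsub := ⟨fun {x y} h => by
    rcases cFnzd x.1 y.1 x.2 y.2 (congrArg Subtype.val h) with h0 | h0
    · exact Or.inl (Subtype.ext h0)
    · exact Or.inr (Subtype.ext h0)⟩
  haveI : Nontrivial ↥Fsub :=
    ⟨⟨0, 1, fun h => (by decide : ((0:R) ≠ 1)) (congrArg Subtype.val h)⟩⟩
  haveI : IsDomain ↥Fsub := NoZeroDivisors.to_isDomain _
  exact Fintype.fieldOfDomain _

lemma cardGF4 : Nat.card (GaloisField 2 2) = 4 := by
  have h := GaloisField.card 2 2 (by norm_num)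
  simpa using h

noncomputable def isoFsub : ↥Fsub ≃+* GaloisField 2 2 := by
  letI : Fintype (GaloisField 2 2) := Fintype.ofFinite _
  refine FiniteField.ringEquivOfCardEq ?_
  simp only [← Nat.card_eq_fintype_card]
  rw [cardFsub, cardGF4]

noncomputable def eqvFR : ↥FR ≃+* ↥Fsub where
  toFun x := ⟨x.1, x.2⟩
  invFun x := ⟨x.1, x.2⟩
  left_inv _ := rfl
  right_inv _ := rfl
  map_mul' _ _ := rfl
  map_add' _ _ := rfl

noncomputable def isoFR : ↥FR ≃+* GaloisField 2 2 := eqvFR.trans isoFsub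

-- # Uniqueness of the F4 subring

lemma d4R : ∀ e a : R, e*e = e → e*a = a → a*e = a → a*a + a + e = 0 →
    e ≠ 0 → a ≠ 0 → a ≠ e → (e = 1 ∧ (a = Amat ∨ a = 1 + Amat)) := by
  intro e a
  obtain ⟨ve, rfl⟩ := hsurj e
  obtain ⟨va, rfl⟩ := hsurj a
  intro h1 h2 h3 h4 h5 h6 h7
  rw [← hmul, phieq] at h1 h2 h3
  rw [← hmul va va, ← hadd (mulV va va) va, ← hadd (addV (mulV va va) va) ve, ← hzero,
    phieq] at h4
  have h5' : ve ≠ zV := fun h => h5 (by rw [h, hzero])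
  have h6' : va ≠ zV := fun h => h6 (by rw [h, hzero])
  have h7' : va ≠ ve := fun h => h7 (by rw [h])
  obtain ⟨he, ha⟩ := d4V ve va h1 h2 h3 h4 h5' h6' h7'
  refine ⟨by rw [he, hone], ?_⟩
  rcases ha with h | h
  · exact Or.inl (by rw [h, hAmat])
  · exact Or.inr (by rw [h, hA1mat])

lemma eq_FR_of_iso (M : NonUnitalSubring R) (f : M ≃+* GaloisField 2 2) : M = FR := by
  classical
  obtain ⟨u, hu0, hu1⟩ : ∃ u : GaloisField 2 2, u ≠ 0 ∧ u ≠ 1 := by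
    by_contra hcon
    push_neg at hcon
    have hsub : (Set.univ : Set (GaloisField 2 2)) ⊆ {0, 1} := by
      intro w _
      rcases eq_or_ne w 0 with h0 | h0
      · exact Or.inl h0
      · exact Or.inr (hcon w h0)
    have hle := Set.ncard_le_ncard hsub (Set.toFinite _)
    rw [Set.ncard_univ, cardGF4] at hle
    have h2 : ({0, 1} : Set (GaloisField 2 2)).ncard ≤ 2 := by
      apply le_trans (Set.ncard_insert_le _ _)
      simp [Set.ncard_singleton]
    omega
  have hu3 : u ^ 3 = 1 := by
    letI : Fintype (GaloisField 2 2) := Fintype.ofFinite _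
    have hc : Fintype.card (GaloisField 2 2) = 4 := by
      rw [← Nat.card_eq_fintype_card, cardGF4]
    have h := FiniteField.pow_card_sub_one_eq_one u hu0
    rwa [hc] at h
  have hrel : u * u + u + 1 = 0 := by
    have hfac : (u - 1) * (u * u + u + 1) = u ^ 3 - 1 := by ring
    rw [hu3, sub_self] at hfac
    rcases mul_eq_zero.mp hfac with h | h
    · exact absurd (sub_eq_zero.mp h) hu1
    · exact h
  -- the idempotent and the generator
  have he : f.symm 1 * f.symm 1 = f.symm 1 := by rw [← map_mul, one_mul]
  have hea : f.symm 1 * f.symm u = f.symm u := by rw [← map_mul, one_mul]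
  have hae : f.symm u * f.symm 1 = f.symm u := by rw [← map_mul, mul_one]
  have haa : f.symm u * f.symm u + f.symm u + f.symm 1 = 0 := by
    rw [← map_mul, ← map_add, ← map_add, hrel, map_zero]
  have hne : f.symm 1 ≠ 0 := fun h =>
    one_ne_zero (f.symm.injective (by rw [h, map_zero]))
  have hane : f.symm u ≠ 0 := fun h =>
    hu0 (f.symm.injective (by rw [h, map_zero]))
  have haene : f.symm u ≠ f.symm 1 := fun h => hu1 (f.symm.injective h)
  -- coerce to R
  have hce : ((f.symm 1 : M) : R) * ((f.symm 1 : M) : R) = ((f.symm 1 : M) : R) := by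
    have := congrArg (fun t : M => (t : R)) he
    push_cast at this
    exact this
  have hcea : ((f.symm 1 : M) : R) * ((f.symm u : M) : R) = ((f.symm u : M) : R) := by
    have := congrArg (fun t : M => (t : R)) hea
    push_cast at this
    exact this
  have hcae : ((f.symm u : M) : R) * ((f.symm 1 : M) : R) = ((f.symm u : M) : R) := by
    have := congrArg (fun t : M => (t : R)) hae
    push_cast at this
    exact this
  have hcaa : ((f.symm u : M) : R) * ((f.symm u : M) : R) + ((f.symm u : M) : R) +
      ((f.symm 1 : M) : R) = 0 := by
    have := congrArg (fun t : M => (t : R)) haa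
    push_cast at this
    exact this
  have hcne : ((f.symm 1 : M) : R) ≠ 0 := fun h => hne (Subtype.ext h)
  have hcane : ((f.symm u : M) : R) ≠ 0 := fun h => hane (Subtype.ext h)
  have hcaene : ((f.symm u : M) : R) ≠ ((f.symm 1 : M) : R) := fun h => haene (Subtype.ext h)
  obtain ⟨hE, hA⟩ := d4R _ _ hce hcea hcae hcaa hcne hcane hcaene
  -- all four elements of F4 are in M
  have hsum : ((f.symm 1 : M) : R) + ((f.symm u : M) : R) ∈ M := by
    have := (f.symm 1 + f.symm u : M).2
    push_cast at this
    exact this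
  have hsub : ∀ x : R, PF x → x ∈ M := by
    intro x hx
    rcases hx with rfl | rfl | rfl | rfl
    · exact M.zero_mem
    · rw [← hE]; exact (f.symm 1 : M).2
    · rcases hA with h | h
      · rw [← h]; exact (f.symm u : M).2
      · have hAs : Amat = ((f.symm 1 : M) : R) + ((f.symm u : M) : R) := by
          rw [hE, h]
          decide
        rw [hAs]
        exact hsum
    · rcases hA with h | h
      · have hAs : 1 + Amat = ((f.symm 1 : M) : R) + ((f.symm u : M) : R) := by
          rw [hE, h]
        rw [hAs]
        exact hsum
      · rw [← h]; exact (f.symm u : M).2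
  -- cardinality
  have hMcard : (M : Set R).ncard = 4 := by
    have h1 : Nat.card M = 4 := by rw [Nat.card_congr f.toEquiv, cardGF4]
    rw [← Nat.card_coe_set_eq]
    exact h1
  have hFcard : ({x : R | PF x}).ncard = 4 := by
    have hset : {x : R | PF x} = ↑({0, 1, Amat, 1 + Amat} : Finset R) := by
      ext x
      rw [Finset.mem_coe, Ffin_iff]
      rfl
    rw [hset, Set.ncard_coe_finset]
    decide
  have hsubset : {x : R | PF x} ⊆ (M : Set R) := fun x hx => hsub x hx
  have hSeteq : {x : R | PF x} = (M : Set R) :=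
    Set.eq_of_subset_of_ncard_le hsubset (by rw [hMcard, hFcard]) (Set.toFinite _)
  apply SetLike.ext'
  rw [← hSeteq]
  rfl

-- # Stabilizers of lines

lemma span_mem (v w : Fin 2 → ZMod 2) :
    w ∈ Submodule.span (ZMod 2) {v} ↔ (w = 0 ∨ w = v) := by
  rw [Submodule.mem_span_singleton]
  constructor
  · rintro ⟨c, rfl⟩
    rcases zmod2cases c with rfl | rfl
    · left; rw [zero_smul]
    · right; rw [one_smul]
  · rintro (rfl | rfl)
    · exact ⟨0, by rw [zero_smul]⟩
    · exact ⟨1, one_smul _ _⟩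

lemma stab_iff (v : Fin 2 → ZMod 2) (x : R) :
    (∀ w ∈ Submodule.span (ZMod 2) {v}, x.mulVec w ∈ Submodule.span (ZMod 2) {v}) ↔
      (x.mulVec v = 0 ∨ x.mulVec v = v) := by
  constructor
  · intro h
    exact (span_mem v _).mp (h v ((span_mem v v).mpr (Or.inr rfl)))
  · intro h w hw
    rcases (span_mem v w).mp hw with rfl | rfl
    · rw [Matrix.mulVec_zero]; exact Submodule.zero_mem _
    · exact (span_mem _ _).mpr h

lemma vclass : ∀ v : Fin 2 → ZMod 2, v ≠ 0 →
    v = ![1,0] ∨ v = ![0,1] ∨ v = ![1,1] := by decide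
lemma s0 : ∀ x : R, (x.mulVec ![1,0] = 0 ∨ x.mulVec ![1,0] = ![1,0]) ↔ PB0 x := by decide
lemma s1 : ∀ x : R, (x.mulVec ![0,1] = 0 ∨ x.mulVec ![0,1] = ![0,1]) ↔ PB1 x := by decide
lemma s2 : ∀ x : R, (x.mulVec ![1,1] = 0 ∨ x.mulVec ![1,1] = ![1,1]) ↔ PB2 x := by decide
lemma v0ne : (![1,0] : Fin 2 → ZMod 2) ≠ 0 := by decide
lemma v1ne : (![0,1] : Fin 2 → ZMod 2) ≠ 0 := by decide
lemma v2ne : (![1,1] : Fin 2 → ZMod 2) ≠ 0 := by decide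

lemma stabSet0 :
    {A : R | ∀ w ∈ Submodule.span (ZMod 2) {(![1,0] : Fin 2 → ZMod 2)},
      A.mulVec w ∈ Submodule.span (ZMod 2) {(![1,0] : Fin 2 → ZMod 2)}} = (B0R : Set R) := by
  ext x
  rw [Set.mem_setOf_eq, stab_iff, s0]
  rfl

lemma stabSet1 :
    {A : R | ∀ w ∈ Submodule.span (ZMod 2) {(![0,1] : Fin 2 → ZMod 2)},
      A.mulVec w ∈ Submodule.span (ZMod 2) {(![0,1] : Fin 2 → ZMod 2)}} = (B1R : Set R) := by
  ext x
  rw [Set.mem_setOf_eq, stab_iff, s1]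
  rfl

lemma stabSet2 :
    {A : R | ∀ w ∈ Submodule.span (ZMod 2) {(![1,1] : Fin 2 → ZMod 2)},
      A.mulVec w ∈ Submodule.span (ZMod 2) {(![1,1] : Fin 2 → ZMod 2)}} = (B2R : Set R) := by
  ext x
  rw [Set.mem_setOf_eq, stab_iff, s2]
  rfl

lemma finrank_span0 :
    Module.finrank (ZMod 2) (Submodule.span (ZMod 2) {(![1,0] : Fin 2 → ZMod 2)}) = 1 :=
  finrank_span_singleton v0ne
lemma finrank_span1 :
    Module.finrank (ZMod 2) (Submodule.span (ZMod 2) {(![0,1] : Fin 2 → ZMod 2)}) = 1 :=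
  finrank_span_singleton v1ne
lemma finrank_span2 :
    Module.finrank (ZMod 2) (Submodule.span (ZMod 2) {(![1,1] : Fin 2 → ZMod 2)}) = 1 :=
  finrank_span_singleton v2ne

end M2F2Aux

open M2F2Aux

/-- `M₂(F₂)` has exactly four maximal subrings: the unique subring isomorphic to `F₄`,
and the three stabilizers of the lines (one-dimensional subspaces) of `F₂²`. -/
theorem maximal_subrings_of_M2F2 :
    (∀ M N : NonUnitalSubring (Matrix (Fin 2) (Fin 2) (ZMod 2)),
        Nonempty (M ≃+* GaloisField 2 2) → Nonempty (N ≃+* GaloisField 2 2) → M = N) ∧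
    (∀ M : NonUnitalSubring (Matrix (Fin 2) (Fin 2) (ZMod 2)),
      (M ≠ ⊤ ∧ ∀ N, M < N → N = ⊤) ↔
        (Nonempty (M ≃+* GaloisField 2 2) ∨
          ∃ L : Submodule (ZMod 2) (Fin 2 → ZMod 2), Module.finrank (ZMod 2) L = 1 ∧
            (M : Set (Matrix (Fin 2) (Fin 2) (ZMod 2))) = {A | ∀ v ∈ L, A.mulVec v ∈ L})) := by
  constructor
  · intro M N hM hN
    rw [eq_FR_of_iso M hM.some, eq_FR_of_iso N hN.some]
  · intro M
    constructor
    · rintro ⟨hne, hmax⟩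
      have key : M = FR ∨ M = B0R ∨ M = B1R ∨ M = B2R := by
        rcases proper_sub M hne with H | H | H | H
        · left
          rcases eq_or_lt_of_le (show M ≤ FR from fun x hx => H x hx) with h | h
          · exact h
          · exact absurd (hmax FR h) FRne
        · right; left
          rcases eq_or_lt_of_le (show M ≤ B0R from fun x hx => H x hx) with h | h
          · exact h
          · exact absurd (hmax B0R h) B0Rne
        · right; right; left
          rcases eq_or_lt_of_le (show M ≤ B1R from fun x hx => H x hx) with h | h
          · exact h
          · exact absurd (hmax B1R h) B1Rne
        · right; right; right
          rcases eq_or_lt_of_le (show M ≤ B2R from fun x hx => H x hx) with h | h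
          · exact h
          · exact absurd (hmax B2R h) B2Rne
      rcases key with rfl | rfl | rfl | rfl
      · exact Or.inl ⟨isoFR⟩
      · exact Or.inr ⟨_, finrank_span0, stabSet0.symm⟩
      · exact Or.inr ⟨_, finrank_span1, stabSet1.symm⟩
      · exact Or.inr ⟨_, finrank_span2, stabSet2.symm⟩
    · rintro (hf | ⟨L, hfr, hcar⟩)
      · obtain ⟨f⟩ := hf
        have hM := eq_FR_of_iso M f
        subst hM
        exact ⟨FRne, FR_max⟩
      · -- identify L as the span of a nonzero vector
        have hbot : L ≠ ⊥ := by
          intro h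
          rw [h, finrank_bot] at hfr
          omega
        obtain ⟨v, hvL, hv0⟩ := Submodule.exists_mem_ne_zero_of_ne_bot hbot
        have hsp : Submodule.span (ZMod 2) {v} = L := by
          apply Submodule.eq_of_le_of_finrank_le
          · rwa [Submodule.span_singleton_le_iff_mem]
          · rw [hfr, finrank_span_singleton hv0]
        rcases vclass v hv0 with rfl | rfl | rfl
        · have hM : M = B0R := by
            apply SetLike.ext'
            rw [hcar, ← hsp]
            exact stabSet0
          subst hM
          exact ⟨B0Rne, B0R_max⟩
        · have hM : M = B1R := by
            apply SetLike.ext'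
            rw [hcar, ← hsp]
            exact stabSet1
          subst hM
          exact ⟨B1Rne, B1R_max⟩
        · have hM : M = B2R := by
            apply SetLike.ext'
            rw [hcar, ← hsp]
            exact stabSet2
          subst hM
          exact ⟨B2Rne, B2R_max⟩
end

section
/- Let R be a finite unital ring and suppose R = S_1 ∪ ... ∪ S_n is a cover by proper subrings such that no S_i is contained in the union of the others. Then the index of S := S_1 ∩ ... ∩ S_n as an additive subgroup of R satisfies [R : S] ≤ n!. -/
open scoped Nat Pointwise

lemma key_step {R : Type*} [Ring R] {n : ℕ} (S : Fin n → NonUnitalSubring R)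
    (hcover : ∀ x : R, ∃ i, x ∈ S i)
    (hirr : ∀ i, ∃ x ∈ S i, ∀ j, j ≠ i → x ∉ S j)
    (T : Finset (Fin n)) (hT : Tᶜ.Nonempty) :
    ∃ k ∈ Tᶜ, ((S k).toAddSubgroup).relIndex (⨅ i ∈ T, (S i).toAddSubgroup) ≤ Tᶜ.card := by
  classical
  set E : AddSubgroup R := ⨅ i ∈ T, (S i).toAddSubgroup with hE
  have hE_le : ∀ j ∈ T, E ≤ (S j).toAddSubgroup := fun j hj => biInf_le _ hj
  obtain ⟨i₀, hi₀⟩ := hT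
  obtain ⟨x, hx, hxj⟩ := hirr i₀
  have hxT : ∀ j ∈ T, x ∉ S j := by
    intro j hj
    refine hxj j ?_
    rintro rfl
    exact (Finset.mem_compl.mp hi₀) hj
  set K : Fin n → AddSubgroup E := fun i => ((S i).toAddSubgroup).addSubgroupOf E with hK
  set g : Fin n → E := fun i =>
    if h : ∃ e : E, x + (e : R) ∈ S i then h.choose else 0 with hg
  have hcov : ⋃ i ∈ Tᶜ, (g i) +ᵥ ((K i : AddSubgroup E) : Set E) = Set.univ := by
    rw [Set.eq_univ_iff_forall]
    intro e
    rw [Set.mem_iUnion₂]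
    obtain ⟨i, hi⟩ := hcover (x + (e : R))
    have hiT : i ∈ Tᶜ := by
      rw [Finset.mem_compl]
      intro hiT
      have he : (e : R) ∈ S i := hE_le i hiT e.2
      exact hxT i hiT (by simpa using (S i).sub_mem hi he)
    have hex : ∃ e' : E, x + (e' : R) ∈ S i := ⟨e, hi⟩
    have hgi : x + ((g i : E) : R) ∈ S i := by
      rw [hg]; simp only [dif_pos hex]; exact hex.choose_spec
    refine ⟨i, hiT, ?_⟩
    rw [Set.mem_vadd_set_iff_neg_vadd_mem]
    have hmem : (-((g i : E) : R) + (e : R)) ∈ S i := by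
      have := (S i).add_mem ((S i).neg_mem hgi) hi
      have harith : -(x + ((g i : E) : R)) + (x + (e : R)) = -((g i : E) : R) + (e : R) := by
        abel
      rwa [harith] at this
    show -(g i) + e ∈ K i
    rw [hK]
    simpa [AddSubgroup.mem_addSubgroupOf] using hmem
  obtain ⟨k, hk, _, hle⟩ := AddSubgroup.exists_index_le_card_of_leftCoset_cover hcov
  exact ⟨k, hk, hle⟩

/-- If a finite unital ring `R` is covered irredundantly by `n` proper subrings, then
the index of the intersection of the subrings, as an additive subgroup, is at most `n!`. -/
theorem index_of_intersection_le_factorial (R : Type*) [Ring R] [Finite R]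
    (n : ℕ) (S : Fin n → NonUnitalSubring R)
    (hproper : ∀ i, S i ≠ ⊤)
    (hcover : ∀ x : R, ∃ i, x ∈ S i)
    (hirr : ∀ i, ∃ x ∈ S i, ∀ j, j ≠ i → x ∉ S j) :
    (⨅ i, (S i).toAddSubgroup).index ≤ n ! := by
  classical
  set D : AddSubgroup R := ⨅ i, (S i).toAddSubgroup with hD
  have main : ∀ m (T : Finset (Fin n)), Tᶜ.card = m →
      D.relIndex (⨅ i ∈ T, (S i).toAddSubgroup) ≤ m ! := by
    intro m
    induction m with
    | zero =>
      intro T hT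
      have hTu : T = Finset.univ := by
        rwa [Finset.card_eq_zero, Finset.compl_eq_empty_iff] at hT
      subst hTu
      have : (⨅ i ∈ Finset.univ, (S i).toAddSubgroup) = D := by
        rw [hD]; simp
      rw [this, AddSubgroup.relIndex_self]
      exact le_refl _
    | succ m ih =>
      intro T hT
      have hTne : Tᶜ.Nonempty := Finset.card_pos.mp (by omega)
      obtain ⟨k, hk, hle⟩ := key_step S hcover hirr T hTne
      have hknT : k ∉ T := Finset.mem_compl.mp hk
      have hT' : (insert k T)ᶜ.card = m := by
        have h1 : (insert k T).card = T.card + 1 := Finset.card_insert_of_notMem hknT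
        have h2 : Tᶜ.card = Fintype.card (Fin n) - T.card := Finset.card_compl T
        have h3 : (insert k T)ᶜ.card = Fintype.card (Fin n) - (insert k T).card :=
          Finset.card_compl _
        have h4 : (insert k T).card ≤ Fintype.card (Fin n) := Finset.card_le_univ _
        omega
      have hEins : (⨅ i ∈ insert k T, (S i).toAddSubgroup)
          = (S k).toAddSubgroup ⊓ ⨅ i ∈ T, (S i).toAddSubgroup := by
        exact Finset.iInf_insert _ _ _
      have hD_le' : D ≤ ⨅ i ∈ insert k T, (S i).toAddSubgroup :=
        le_iInf fun i => le_iInf fun _ => iInf_le _ i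
      have hle2 : (⨅ i ∈ insert k T, (S i).toAddSubgroup)
          ≤ ⨅ i ∈ T, (S i).toAddSubgroup := by
        rw [hEins]; exact inf_le_right
      have hmul := AddSubgroup.relIndex_mul_relIndex D
        (⨅ i ∈ insert k T, (S i).toAddSubgroup) (⨅ i ∈ T, (S i).toAddSubgroup) hD_le' hle2
      have hrel2 : (⨅ i ∈ insert k T, (S i).toAddSubgroup).relIndex
          (⨅ i ∈ T, (S i).toAddSubgroup) ≤ m + 1 := by
        rw [hEins, AddSubgroup.inf_relIndex_right]
        rw [hT] at hle
        exact hle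
      calc D.relIndex (⨅ i ∈ T, (S i).toAddSubgroup)
          = D.relIndex (⨅ i ∈ insert k T, (S i).toAddSubgroup)
            * (⨅ i ∈ insert k T, (S i).toAddSubgroup).relIndex
              (⨅ i ∈ T, (S i).toAddSubgroup) := hmul.symm
        _ ≤ m ! * (m + 1) := Nat.mul_le_mul (ih _ hT') hrel2
        _ = (m + 1)! := by rw [Nat.factorial_succ]; ring
  have h := main n ∅ (by simp)
  simpa [AddSubgroup.relIndex_top_right] using h
end

section
/- Let R be a unital ring of characteristic p^f with p prime and f ≥ 1, and let S be a maximal proper subring of R. Then pR ⊆ S. -/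
/-- If `R` is a unital ring of characteristic `p^f` (`p` prime, `f ≥ 1`) and `S` is a
maximal proper subring of `R` (subrings need not contain 1), then `pR ⊆ S`. -/
theorem pR_subset_maximal_subring (R : Type*) [Ring R] (p f : ℕ) (hp : p.Prime)
    (hf : 1 ≤ f) [CharP R (p ^ f)] (S : NonUnitalSubring R)
    (hS : S ≠ ⊤) (hmax : ∀ T : NonUnitalSubring R, S < T → T = ⊤) :
    ∀ r : R, (p : R) * r ∈ S := by
  by_contra h
  push_neg at h
  obtain ⟨r0, hr0⟩ := h
  -- T = S + pR
  set T : NonUnitalSubring R :=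
    { carrier := {x | ∃ s ∈ S, ∃ r : R, x = s + (p : R) * r}
      add_mem' := by
        rintro a b ⟨s, hs, r, rfl⟩ ⟨s', hs', r', rfl⟩
        exact ⟨s + s', S.add_mem hs hs', r + r', by noncomm_ring⟩
      zero_mem' := ⟨0, S.zero_mem, 0, by simp⟩
      neg_mem' := by
        rintro a ⟨s, hs, r, rfl⟩
        exact ⟨-s, S.neg_mem hs, -r, by noncomm_ring⟩
      mul_mem' := by
        rintro a b ⟨s, hs, r, rfl⟩ ⟨s', hs', r', rfl⟩
        refine ⟨s * s', S.mul_mem hs hs', s * r' + r * s' + r * ((p : R) * r'), ?_⟩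
        rw [mul_add, add_mul, add_mul, ← mul_assoc s, ← (Nat.cast_commute p s).eq,
          mul_assoc (p : R) s r', mul_assoc, mul_assoc, mul_add, mul_add]
        abel } with hT
  have hST : S ≤ T := fun s hs => ⟨s, hs, 0, by simp⟩
  have hSneT : S ≠ T := by
    intro hEq
    exact hr0 (hEq ▸ (⟨0, S.zero_mem, r0, by simp⟩ : (p : R) * r0 ∈ T))
  have hTtop : T = ⊤ := hmax T (lt_of_le_of_ne hST hSneT)
  -- key claim by induction
  have key : ∀ k : ℕ, ∀ x : R, ∃ s ∈ S, ∃ r : R, x = s + (p : R) ^ (k + 1) * r := by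
    intro k
    induction k with
    | zero =>
      intro x
      have hx : x ∈ T := hTtop ▸ trivial
      obtain ⟨s, hs, r, rfl⟩ := hx
      exact ⟨s, hs, r, by rw [pow_one]⟩
    | succ n ih =>
      intro x
      obtain ⟨s, hs, r, rfl⟩ := ih x
      have hr : r ∈ T := hTtop ▸ trivial
      obtain ⟨s', hs', r', rfl⟩ := hr
      refine ⟨s + (p : R) ^ (n + 1) * s', ?_, r', ?_⟩
      · refine S.add_mem hs ?_
        have h2 : (p : R) ^ (n + 1) * s' = (p ^ (n + 1)) • s' := by
          rw [nsmul_eq_mul]; push_cast; rfl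
        rw [h2]
        exact nsmul_mem hs' _
      · rw [mul_add, ← mul_assoc, ← pow_succ]
        exact (add_assoc _ _ _).symm
  obtain ⟨m, rfl⟩ := Nat.exists_eq_add_of_le hf
  have hpf : ((p : R)) ^ (m + 1) = 0 := by
    have := CharP.cast_eq_zero R (p ^ (1 + m))
    push_cast at this
    rwa [add_comm] at this
  apply hS
  rw [eq_top_iff]
  intro x _
  obtain ⟨s, hs, r, hx⟩ := key m x
  rw [hx, hpf, zero_mul, add_zero]
  exact hs
end

section
/- Let R_1 and R_2 be finite unital rings such that no nonzero ring is simultaneously a quotient of R_1 and of R_2 (i.e., there are no proper ideals I_1 ⊆ R_1, I_2 ⊆ R_2 with R_1/I_1 ≅ R_2/I_2 nonzero). Then every maximal subring of R_1 × R_2 has the form M_1 × R_2 or R_1 × M_2, where M_i is a maximal subring of R_i. -/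
/-- Auxiliary: if a subring of `R₁ × R₂` surjects onto both factors, and the two rings
have no common nonzero quotient (as in `maximal_subring_of_product`), then it is everything. -/
theorem aux_no_double_surj {R₁ R₂ : Type*} [Ring R₁] [Ring R₂] [Finite R₂]
    (hquot : ∀ (A : Type) [Ring A], Nontrivial A →
      ∀ (f : R₁ →+* A) (g : R₂ →+* A),
        ¬ (Function.Surjective f ∧ Function.Surjective g))
    (T : NonUnitalSubring (R₁ × R₂)) (hT : T ≠ ⊤)
    (h1 : ∀ r : R₁, ∃ s, (r, s) ∈ T) (h2 : ∀ s : R₂, ∃ r, (r, s) ∈ T) : False := by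
  classical
  -- the "vertical" part of T, as a predicate on R₂
  set J : R₂ → Prop := fun y => ((0 : R₁), y) ∈ T with hJ
  have J0 : J 0 := T.zero_mem
  have Jadd : ∀ {y z}, J y → J z → J (y + z) := by
    intro y z hy hz
    have := T.add_mem hy hz
    simpa using this
  have Jneg : ∀ {y}, J y → J (-y) := by
    intro y hy
    have := T.neg_mem hy
    simpa using this
  have Jsub : ∀ {y z}, J y → J z → J (y - z) := by
    intro y z hy hz
    have := Jadd hy (Jneg hz)
    simpa [sub_eq_add_neg] using this
  have Jmul_right : ∀ {y}, J y → ∀ z, J (y * z) := by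
    intro y hy z
    obtain ⟨x, hx⟩ := h2 z
    have := T.mul_mem hy hx
    simpa using this
  have Jmul_left : ∀ {y}, J y → ∀ z, J (z * y) := by
    intro y hy z
    obtain ⟨x, hx⟩ := h2 z
    have := T.mul_mem hx hy
    simpa using this
  -- the congruence relation on R₂ induced by T
  let c : RingCon R₂ :=
  { r := fun a b => J (a - b)
    iseqv := ⟨fun a => by simpa using J0,
      fun {a b} h => by simpa using Jneg h,
      fun {a b d} hab hbd => by
        have := Jadd hab hbd
        simpa using this⟩
    add' := fun {w x y z} hw hy => by
      have := Jadd hw hy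
      have heq : w - x + (y - z) = w + y - (x + z) := by noncomm_ring
      rwa [heq] at this
    mul' := fun {w x y z} hw hy => by
      have h1' : J ((w - x) * y) := Jmul_right hw y
      have h2' : J (x * (y - z)) := Jmul_left hy x
      have := Jadd h1' h2'
      have heq : (w - x) * y + x * (y - z) = w * y - x * z := by noncomm_ring
      rwa [heq] at this }
  have hc : ∀ {a b : R₂}, c a b ↔ J (a - b) := Iff.rfl
  -- if every element is in J, then T = ⊤
  have hJne : ∃ y, ¬ J y := by
    by_contra h
    push_neg at h
    apply hT
    ext ⟨r, s⟩
    simp only [NonUnitalSubring.mem_top, iff_true]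
    obtain ⟨s₀, hs₀⟩ := h1 r
    have := T.add_mem hs₀ (h (s - s₀))
    simpa using this
  -- the quotient
  haveI : Nontrivial c.Quotient := by
    obtain ⟨y, hy⟩ := hJne
    refine ⟨(y : c.Quotient), (0 : R₂), fun h => ?_⟩
    rw [RingCon.eq] at h
    exact hy (by simpa using hc.mp h)
  -- the map R₁ → c.Quotient
  choose σ hσ using h1
  have key : ∀ {r : R₁} {s : R₂}, (r, s) ∈ T → ((σ r : c.Quotient) = (s : c.Quotient)) := by
    intro r s h
    rw [RingCon.eq]
    refine hc.mpr ?_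
    have := T.sub_mem (hσ r) h
    simpa using this
  let f : R₁ →+* c.Quotient :=
  { toFun := fun r => (σ r : c.Quotient)
    map_one' := by
      obtain ⟨x, hx⟩ := h2 1
      have hmul := T.mul_mem (hσ 1) hx
      have : ((1 : R₁) * x, σ 1 * 1) ∈ T := hmul
      rw [one_mul, mul_one] at this
      have hsub := T.sub_mem this hx
      have hJ1 : J (σ 1 - 1) := by simpa using hsub
      show (σ 1 : c.Quotient) = 1
      have : ((σ 1 : R₂) : c.Quotient) = ((1 : R₂) : c.Quotient) := by
        rw [RingCon.eq]; exact hc.mpr hJ1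
      simpa using this
    map_mul' := by
      intro a b
      have := T.mul_mem (hσ a) (hσ b)
      have h' : (a * b, σ a * σ b) ∈ T := this
      have := key h'
      simpa using this
    map_zero' := by
      have := key (r := 0) (s := 0) (by exact T.zero_mem)
      simpa using this
    map_add' := by
      intro a b
      have := T.add_mem (hσ a) (hσ b)
      have h' : (a + b, σ a + σ b) ∈ T := this
      have := key h'
      simpa using this }
  have hfsurj : Function.Surjective f := by
    intro q
    obtain ⟨y, rfl⟩ := Quotient.exists_rep q
    obtain ⟨r, hr⟩ := h2 y
    exact ⟨r, key hr⟩
  have hgsurj : Function.Surjective (c.mk' : R₂ →+* c.Quotient) := by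
    intro q
    obtain ⟨y, rfl⟩ := Quotient.exists_rep q
    exact ⟨y, rfl⟩
  -- shrink the quotient to Type 0
  haveI : Finite c.Quotient := Quotient.finite _
  haveI : Small.{0} c.Quotient := by
    haveI := Fintype.ofFinite c.Quotient
    exact small_map (Fintype.equivFin c.Quotient)
  let ψ := Shrink.ringEquiv c.Quotient
  haveI : Nontrivial (Shrink.{0} c.Quotient) := ψ.toEquiv.nontrivial
  exact hquot (Shrink.{0} c.Quotient) inferInstance
    (ψ.symm.toRingHom.comp f) (ψ.symm.toRingHom.comp c.mk')
    ⟨ψ.symm.surjective.comp hfsurj, ψ.symm.surjective.comp hgsurj⟩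

/-- Let `R₁`, `R₂` be finite unital rings with no common nonzero quotient ring. Then every
maximal subring of `R₁ × R₂` is of the form `M₁ × R₂` or `R₁ × M₂` with `Mᵢ` a maximal
subring of `Rᵢ`. Subrings need not contain the identity. -/
theorem maximal_subring_of_product (R₁ R₂ : Type*) [Ring R₁] [Ring R₂]
    [Finite R₁] [Finite R₂]
    (hquot : ∀ (A : Type) [Ring A], Nontrivial A →
      ∀ (f : R₁ →+* A) (g : R₂ →+* A),
        ¬ (Function.Surjective f ∧ Function.Surjective g))
    (T : NonUnitalSubring (R₁ × R₂)) (hT : T ≠ ⊤) (hTmax : ∀ N, T < N → N = ⊤) :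
    (∃ M₁ : NonUnitalSubring R₁, (M₁ ≠ ⊤ ∧ ∀ N, M₁ < N → N = ⊤) ∧
        (T : Set (R₁ × R₂)) = (M₁ : Set R₁) ×ˢ (Set.univ : Set R₂)) ∨
    (∃ M₂ : NonUnitalSubring R₂, (M₂ ≠ ⊤ ∧ ∀ N, M₂ < N → N = ⊤) ∧
        (T : Set (R₁ × R₂)) = (Set.univ : Set R₁) ×ˢ (M₂ : Set R₂)) := by
  classical
  -- the two projections of T
  let A₁ : NonUnitalSubring R₁ :=
  { carrier := Prod.fst '' (T : Set (R₁ × R₂))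
    add_mem' := by
      rintro a b ⟨p, hp, rfl⟩ ⟨q, hq, rfl⟩
      exact ⟨p + q, T.add_mem hp hq, rfl⟩
    zero_mem' := ⟨0, T.zero_mem, rfl⟩
    neg_mem' := by
      rintro a ⟨p, hp, rfl⟩
      exact ⟨-p, T.neg_mem hp, rfl⟩
    mul_mem' := by
      rintro a b ⟨p, hp, rfl⟩ ⟨q, hq, rfl⟩
      exact ⟨p * q, T.mul_mem hp hq, rfl⟩ }
  let A₂ : NonUnitalSubring R₂ :=
  { carrier := Prod.snd '' (T : Set (R₁ × R₂))
    add_mem' := by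
      rintro a b ⟨p, hp, rfl⟩ ⟨q, hq, rfl⟩
      exact ⟨p + q, T.add_mem hp hq, rfl⟩
    zero_mem' := ⟨0, T.zero_mem, rfl⟩
    neg_mem' := by
      rintro a ⟨p, hp, rfl⟩
      exact ⟨-p, T.neg_mem hp, rfl⟩
    mul_mem' := by
      rintro a b ⟨p, hp, rfl⟩ ⟨q, hq, rfl⟩
      exact ⟨p * q, T.mul_mem hp hq, rfl⟩ }
  have hle : T ≤ A₁.prod A₂ := by
    rintro ⟨a, b⟩ h
    exact ⟨⟨(a, b), h, rfl⟩, ⟨(a, b), h, rfl⟩⟩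
  rcases eq_or_lt_of_le hle with heq | hlt
  · -- T is a product A₁ × A₂
    by_cases hA1 : A₁ = ⊤
    · by_cases hA2 : A₂ = ⊤
      · exact absurd (by rw [heq, hA1, hA2, NonUnitalSubring.top_prod_top]) hT
      · -- T = ⊤ × A₂ : right case
        refine Or.inr ⟨A₂, ⟨hA2, ?_⟩, ?_⟩
        · intro N hN
          obtain ⟨y, hyN, hyA⟩ := SetLike.exists_of_lt hN
          have hlt' : T < A₁.prod N := by
            rw [heq]
            refine lt_of_le_of_ne (NonUnitalSubring.prod_mono le_rfl hN.le) (fun habs => ?_)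
            have : ((0 : R₁), y) ∈ A₁.prod A₂ := by
              rw [habs]
              exact ⟨by rw [hA1]; trivial, hyN⟩
            exact hyA this.2
          have htop := hTmax _ hlt'
          ext y'
          simp only [NonUnitalSubring.mem_top, iff_true]
          have : ((0 : R₁), y') ∈ A₁.prod N := by rw [htop]; trivial
          exact this.2
        · rw [heq, NonUnitalSubring.coe_prod, hA1]
          rfl
    · by_cases hA2 : A₂ = ⊤
      · -- T = A₁ × ⊤ : left case
        refine Or.inl ⟨A₁, ⟨hA1, ?_⟩, ?_⟩
        · intro N hN
          obtain ⟨x, hxN, hxA⟩ := SetLike.exists_of_lt hN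
          have hlt' : T < N.prod A₂ := by
            rw [heq]
            refine lt_of_le_of_ne (NonUnitalSubring.prod_mono hN.le le_rfl) (fun habs => ?_)
            have : (x, (0 : R₂)) ∈ A₁.prod A₂ := by
              rw [habs]
              exact ⟨hxN, by rw [hA2]; trivial⟩
            exact hxA this.1
          have htop := hTmax _ hlt'
          ext x'
          simp only [NonUnitalSubring.mem_top, iff_true]
          have : (x', (0 : R₂)) ∈ N.prod A₂ := by rw [htop]; trivial
          exact this.1
        · rw [heq, NonUnitalSubring.coe_prod, hA2]
          rfl
      · -- both proper: contradiction with maximality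
        exfalso
        have hlt' : T < A₁.prod ⊤ := by
          rw [heq]
          refine lt_of_le_of_ne (NonUnitalSubring.prod_mono le_rfl le_top) (fun habs => ?_)
          apply hA2
          ext y
          simp only [NonUnitalSubring.mem_top, iff_true]
          have : ((0 : R₁), y) ∈ A₁.prod A₂ := by rw [habs]; exact ⟨A₁.zero_mem, trivial⟩
          exact this.2
        have htop := hTmax _ hlt'
        apply hA1
        ext x
        simp only [NonUnitalSubring.mem_top, iff_true]
        have : (x, (0 : R₂)) ∈ A₁.prod ⊤ := by rw [htop]; trivial
        exact this.1
  · -- T < A₁ × A₂, so A₁ × A₂ = ⊤ and T surjects onto both factors: contradiction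
    exfalso
    have htop := hTmax _ hlt
    have h1 : ∀ r : R₁, ∃ s, (r, s) ∈ T := by
      intro r
      have : (r, (0 : R₂)) ∈ A₁.prod A₂ := by rw [htop]; trivial
      obtain ⟨⟨a, b⟩, hab, hfst⟩ := this.1
      exact ⟨b, by rwa [show a = r from hfst] at hab⟩
    have h2 : ∀ s : R₂, ∃ r, (r, s) ∈ T := by
      intro s
      have : ((0 : R₁), s) ∈ A₁.prod A₂ := by rw [htop]; trivial
      obtain ⟨⟨a, b⟩, hab, hsnd⟩ := this.2
      exact ⟨a, by rwa [show b = s from hsnd] at hab⟩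
    exact aux_no_double_surj hquot T hT h1 h2
end

section
/- Among the unital rings of order p² (p prime), namely Z/p², F_{p²}, F_p[t]/(t²), and F_p × F_p, the only one that is a union of finitely many proper subrings is F_2 × F_2. -/
/-- `R` is the union of finitely many proper subrings (subrings need not contain 1). -/
def Coverable (R : Type*) [NonUnitalRing R] : Prop :=
  ∃ (n : ℕ) (c : Fin n → NonUnitalSubring R), (∀ i, c i ≠ ⊤) ∧ ∀ x : R, ∃ i, x ∈ c i


lemma not_coverable_of_gen {R : Type*} [NonUnitalRing R]
    (x : R) (hx : NonUnitalSubring.closure {x} = ⊤) :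
    ¬ (∃ (n : ℕ) (c : Fin n → NonUnitalSubring R), (∀ i, c i ≠ ⊤) ∧ ∀ y : R, ∃ i, y ∈ c i) := by
  rintro ⟨n, c, hne, hcov⟩
  obtain ⟨i, hi⟩ := hcov x
  exact hne i (top_unique (hx ▸ NonUnitalSubring.closure_le.mpr (Set.singleton_subset_iff.mpr hi)))



lemma nsmul_cast_mem {R : Type*} [NonUnitalRing R] (S : NonUnitalSubring R) {m : R}
    (hm : m ∈ S) (n : ℕ) : n • m ∈ S := S.toAddSubgroup.nsmul_mem hm n

lemma gen_zmod (n : ℕ) [NeZero n] : NonUnitalSubring.closure ({1} : Set (ZMod n)) = ⊤ := by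
  rw [eq_top_iff]
  intro y _
  have h1 : (1 : ZMod n) ∈ NonUnitalSubring.closure ({1} : Set (ZMod n)) :=
    NonUnitalSubring.subset_closure rfl
  have : y = y.val • (1 : ZMod n) := by
    rw [nsmul_eq_mul, mul_one]
    simp [ZMod.natCast_val, ZMod.cast_id]
  rw [this]
  exact nsmul_cast_mem _ h1 _

lemma pow_mem_cl {R : Type*} [Ring R] (S : NonUnitalSubring R) {x : R}
    (hx : x ∈ S) : ∀ n : ℕ, 0 < n → x ^ n ∈ S := by
  intro n hn
  induction n with
  | zero => omega
  | succ k ih =>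
    rcases Nat.eq_zero_or_pos k with hk | hk
    · simpa [hk] using hx
    · rw [pow_succ]; exact S.mul_mem (ih hk) hx

lemma gen_field {F : Type*} [Field F] [Finite F] :
    ∃ x : F, NonUnitalSubring.closure ({x} : Set F) = ⊤ := by
  obtain ⟨g, hg⟩ := IsCyclic.exists_generator (α := Fˣ)
  refine ⟨(g : F), ?_⟩
  rw [eq_top_iff]
  intro y _
  rcases eq_or_ne y 0 with rfl | hy
  · exact zero_mem _
  have hx : (g : F) ∈ NonUnitalSubring.closure ({(g : F)} : Set F) :=
    NonUnitalSubring.subset_closure rfl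
  obtain ⟨k, hk⟩ := (mem_powers_iff_mem_zpowers.mpr (hg (IsUnit.unit (isUnit_iff_ne_zero.mpr hy))))
  -- hk : g ^ k = unit y
  have hord : 0 < orderOf g := orderOf_pos g
  rcases Nat.eq_zero_or_pos k with hk0 | hkpos
  · -- y = 1
    have hy1 : y = (g : F) ^ orderOf g := by
      have := congrArg (Units.val) hk
      simp [hk0] at this
      rw [← Units.val_pow_eq_pow_val, pow_orderOf_eq_one]
      simp [← this]
    rw [hy1]
    exact pow_mem_cl _ hx _ hord
  · have hy1 : y = (g : F) ^ k := by
      have := congrArg (Units.val) hk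
      simpa [Units.val_pow_eq_pow_val] using this.symm
    rw [hy1]
    exact pow_mem_cl _ hx _ hkpos

lemma zsmm {p : ℕ} [NeZero p] {R : Type*} [NonUnitalRing R] [Module (ZMod p) R]
    (S : NonUnitalSubring R) {m : R} (hm : m ∈ S) (a : ZMod p) : a • m ∈ S := by
  have : a • m = ((a.val : ℕ) : ZMod p) • m := by
    rw [ZMod.natCast_val, ZMod.cast_id]
  rw [this, Nat.cast_smul_eq_nsmul]
  exact S.toAddSubgroup.nsmul_mem hm _

lemma gen_dual (p : ℕ) [Fact p.Prime] :
    NonUnitalSubring.closure ({1 + DualNumber.eps} : Set (DualNumber (ZMod p))) = ⊤ := by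
  set x : DualNumber (ZMod p) := 1 + DualNumber.eps with hxdef
  set S := NonUnitalSubring.closure ({x} : Set (DualNumber (ZMod p))) with hS
  have hx : x ∈ S := NonUnitalSubring.subset_closure rfl
  have h1 : (1 : DualNumber (ZMod p)) ∈ S := by
    have : (1 : DualNumber (ZMod p)) = (2 : ℤ) • x - x * x := by
      rw [zsmul_eq_mul, hxdef]
      ring_nf
      rw [pow_two, DualNumber.eps_mul_eps]
      ring
    rw [this]
    exact S.sub_mem (S.toAddSubgroup.zsmul_mem hx _) (S.mul_mem hx hx)
  have heps : DualNumber.eps ∈ S := by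
    have : (DualNumber.eps : DualNumber (ZMod p)) = x - 1 := by rw [hxdef]; ring
    rw [this]; exact S.sub_mem hx h1
  rw [eq_top_iff]
  intro y _
  have hy : y = y.fst • (1 : DualNumber (ZMod p)) + y.snd • DualNumber.eps := by
    ext
    · simp
    · simp
  rw [hy]
  exact S.add_mem (zsmm S h1 _) (zsmm S heps _)

lemma gen_prod (p : ℕ) [Fact p.Prime] (hp : p ≠ 2) :
    NonUnitalSubring.closure ({((1 : ZMod p), (2 : ZMod p))} : Set (ZMod p × ZMod p)) = ⊤ := by
  have hodd : Odd p := (Fact.out : p.Prime).odd_of_ne_two hp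
  set x : ZMod p × ZMod p := (1, 2) with hxdef
  set S := NonUnitalSubring.closure ({x} : Set (ZMod p × ZMod p)) with hS
  have hx : x ∈ S := NonUnitalSubring.subset_closure rfl
  have he1 : ((1 : ZMod p), (0 : ZMod p)) ∈ S := by
    have : ((1 : ZMod p), (0 : ZMod p)) = (2 : ℤ) • x - x * x := by
      rw [zsmul_eq_mul]; ext <;> simp [hxdef] <;> ring
    rw [this]
    exact S.sub_mem (S.toAddSubgroup.zsmul_mem hx _) (S.mul_mem hx hx)
  have he2' : ((0 : ZMod p), (2 : ZMod p)) ∈ S := by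
    have : ((0 : ZMod p), (2 : ZMod p)) = x - (1, 0) := by ext <;> simp [hxdef]
    rw [this]; exact S.sub_mem hx he1
  have he2 : ((0 : ZMod p), (1 : ZMod p)) ∈ S := by
    have h2 : ((p + 1) / 2 : ℕ) • ((0 : ZMod p), (2 : ZMod p)) = ((0 : ZMod p), (1 : ZMod p)) := by
      ext
      · simp
      · show ((p + 1) / 2 : ℕ) • (2 : ZMod p) = 1
        rw [nsmul_eq_mul]
        have : ((p + 1) / 2 : ℕ) * 2 = p + 1 := by
          obtain ⟨k, hk⟩ := hodd; omega
        have h : (((p + 1) / 2 * 2 : ℕ) : ZMod p) = 1 := by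
          rw [this]; push_cast; simp
        rw [Nat.cast_mul] at h
        simpa using h
    rw [← h2]
    exact S.toAddSubgroup.nsmul_mem he2' _
  rw [eq_top_iff]
  intro y _
  have hy : y = y.1 • ((1 : ZMod p), (0 : ZMod p)) + y.2 • ((0 : ZMod p), (1 : ZMod p)) := by
    ext <;> simp
  rw [hy]
  exact S.add_mem (zsmm S he1 _) (zsmm S he2 _)

def diagS : NonUnitalSubring (ZMod 2 × ZMod 2) where
  carrier := {x | x.1 = x.2}
  add_mem' := by intro a b ha hb; simp_all [Set.mem_setOf_eq]
  zero_mem' := rfl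
  mul_mem' := by intro a b ha hb; simp_all [Set.mem_setOf_eq]
  neg_mem' := by intro a ha; simp_all [Set.mem_setOf_eq]

def leftS : NonUnitalSubring (ZMod 2 × ZMod 2) where
  carrier := {x | x.2 = 0}
  add_mem' := by intro a b ha hb; simp_all [Set.mem_setOf_eq]
  zero_mem' := rfl
  mul_mem' := by intro a b ha hb; simp_all [Set.mem_setOf_eq]
  neg_mem' := by intro a ha; simp_all [Set.mem_setOf_eq]

def rightS : NonUnitalSubring (ZMod 2 × ZMod 2) where
  carrier := {x | x.1 = 0}
  add_mem' := by intro a b ha hb; simp_all [Set.mem_setOf_eq]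
  zero_mem' := rfl
  mul_mem' := by intro a b ha hb; simp_all [Set.mem_setOf_eq]
  neg_mem' := by intro a ha; simp_all [Set.mem_setOf_eq]

lemma cover2 : ∃ (n : ℕ) (c : Fin n → NonUnitalSubring (ZMod 2 × ZMod 2)),
    (∀ i, c i ≠ ⊤) ∧ ∀ x : ZMod 2 × ZMod 2, ∃ i, x ∈ c i := by
  refine ⟨3, ![diagS, leftS, rightS], ?_, ?_⟩
  · intro i
    fin_cases i <;>
      · intro h
        have := h ▸ NonUnitalSubring.mem_top ((1 : ZMod 2), (0 : ZMod 2))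
        first
          | exact one_ne_zero (α := ZMod 2) this
          | (have := h ▸ NonUnitalSubring.mem_top ((0 : ZMod 2), (1 : ZMod 2));
             exact one_ne_zero (α := ZMod 2) this)
  · intro x
    have : x.1 = x.2 ∨ x.2 = 0 ∨ x.1 = 0 := by revert x; decide
    rcases this with h | h | h
    · exact ⟨0, h⟩
    · exact ⟨1, h⟩
    · exact ⟨2, h⟩

lemma not_coverable_of_gen' {R : Type*} [NonUnitalRing R]
    (x : R) (hx : NonUnitalSubring.closure {x} = ⊤) : ¬ Coverable R :=
  not_coverable_of_gen x hx

/-- Among the unital rings of order `p²`, namely `ℤ/p²`, `F_{p²}`, `F_p[t]/(t²)` and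
`F_p × F_p`, the only coverable one is `F₂ × F₂`. -/
theorem coverable_rings_of_order_p_squared (p : ℕ) [Fact p.Prime] :
    ¬ Coverable (ZMod (p ^ 2)) ∧
    ¬ Coverable (GaloisField p 2) ∧
    ¬ Coverable (DualNumber (ZMod p)) ∧
    (Coverable (ZMod p × ZMod p) ↔ p = 2) := by
  have hp : p.Prime := Fact.out
  have : NeZero (p ^ 2) := ⟨pow_ne_zero 2 hp.ne_zero⟩
  refine ⟨not_coverable_of_gen' 1 (gen_zmod _), ?_, ?_, ?_⟩
  · obtain ⟨x, hx⟩ := gen_field (F := GaloisField p 2)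
    exact not_coverable_of_gen' x hx
  · exact not_coverable_of_gen' _ (gen_dual p)
  · constructor
    · intro hc
      by_contra h2
      exact not_coverable_of_gen' _ (gen_prod p h2) hc
    · rintro rfl
      exact cover2
end

section
/- For every prime p, the ring F_p[t]/(t²) is generated as a ring (without 1) by the single element 1 + t; in particular it is not coverable by proper subrings. -/
lemma closure_top (p : ℕ) (hp : p.Prime) :
    NonUnitalSubring.closure {(1 + DualNumber.eps : DualNumber (ZMod p))} = ⊤ := by
  set R := DualNumber (ZMod p)
  set a : R := 1 + DualNumber.eps with ha
  set S := NonUnitalSubring.closure {a} with hS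
  have haS : a ∈ S := NonUnitalSubring.subset_closure rfl
  have hsq : a * a = 1 + (2 : R) * DualNumber.eps := by
    rw [ha]; ring_nf
    rw [add_mul, mul_add, mul_add, DualNumber.eps_mul_eps]; noncomm_ring
  have hneg1 : (-1 : R) ∈ S := by
    have : a * a - a - a = -1 := by rw [hsq, ha]; noncomm_ring
    rw [← this]
    exact S.sub_mem (S.sub_mem (S.mul_mem haS haS) haS) haS
  have h1 : (1 : R) ∈ S := by convert S.neg_mem hneg1 using 1; exact (neg_neg _).symm
  have heps : (DualNumber.eps : R) ∈ S := by
    have : (DualNumber.eps : R) = a - 1 := by rw [ha]; ring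
    rw [this]; exact S.sub_mem haS h1
  rw [eq_top_iff]
  intro x _
  have hx : x = (x.fst.val : ℕ) • (1 : R) + (x.snd.val : ℕ) • DualNumber.eps := by
    haveI : Fact p.Prime := ⟨hp⟩
    rw [← Nat.cast_smul_eq_nsmul (ZMod p), ← Nat.cast_smul_eq_nsmul (ZMod p)]
    rw [ZMod.natCast_val, ZMod.natCast_val, ZMod.cast_id, ZMod.cast_id]
    rw [← DualNumber.inr_eq_smul_eps, show (1 : R) = TrivSqZeroExt.inl 1 from rfl,
      ← TrivSqZeroExt.inl_smul, smul_eq_mul, mul_one, TrivSqZeroExt.inl_fst_add_inr_snd_eq x]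
  rw [hx]
  exact S.add_mem (nsmul_mem h1 _) (nsmul_mem heps _)

/-- For every prime `p`, the dual numbers `F_p[t]/(t²)` are generated as a (non-unital)
ring by the single element `1 + t`; in particular the ring is not coverable. -/
theorem dual_numbers_generated_by_one_add_eps (p : ℕ) (hp : p.Prime) :
    NonUnitalSubring.closure {(1 + DualNumber.eps : DualNumber (ZMod p))} = ⊤ ∧
    ¬ Coverable (DualNumber (ZMod p)) := by
  refine ⟨closure_top p hp, ?_⟩
  rintro ⟨n, c, hne, hcov⟩
  obtain ⟨i, hi⟩ := hcov (1 + DualNumber.eps)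
  apply hne i
  rw [eq_top_iff, ← closure_top p hp]
  exact NonUnitalSubring.closure_le.2 (by simpa using hi)
end

section
/- For every prime p > 2, the ring F_p × F_p is generated as a ring by the single element (1, 2); consequently F_p × F_p is not a union of proper subrings when p > 2. -/
/-- For every prime `p > 2`, the ring `F_p × F_p` is generated as a (non-unital) ring by
the single element `(1, 2)`; consequently it is not coverable. -/
theorem FpxFp_generated_by_one_two (p : ℕ) (hp : p.Prime) (hp2 : 2 < p) :
    NonUnitalSubring.closure {((1, 2) : ZMod p × ZMod p)} = ⊤ ∧
    ¬ Coverable (ZMod p × ZMod p) := by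
  haveI : Fact p.Prime := ⟨hp⟩
  have h2ne : (2 : ZMod p) ≠ 0 := by
    have : ((2 : ℕ) : ZMod p) ≠ 0 := by
      rw [Ne, ZMod.natCast_eq_zero_iff]
      exact fun h => absurd (Nat.le_of_dvd (by norm_num) h) (not_le.mpr hp2)
    simpa using this
  set S := NonUnitalSubring.closure {((1, 2) : ZMod p × ZMod p)} with hS
  have h1 : ((1, 2) : ZMod p × ZMod p) ∈ S := NonUnitalSubring.subset_closure rfl
  have h2 : ((1, 2) : ZMod p × ZMod p) * (1, 2) ∈ S := S.mul_mem h1 h1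
  have h02 : ((0, 2) : ZMod p × ZMod p) ∈ S := by
    have := S.sub_mem h2 h1
    convert this using 1
    simp [Prod.ext_iff]
    ring
  have h10 : ((1, 0) : ZMod p × ZMod p) ∈ S := by
    have := S.sub_mem h1 h02
    simpa using this
  have h01 : ((0, 1) : ZMod p × ZMod p) ∈ S := by
    have := S.nsmul_mem h02 ((2 : ZMod p)⁻¹).val
    convert this using 1
    have : (((2 : ZMod p)⁻¹).val : ZMod p) = (2 : ZMod p)⁻¹ := by rw [ZMod.natCast_val, ZMod.cast_id]
    simp [Prod.ext_iff, this]
    rw [inv_mul_cancel₀ h2ne]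
  have htop : S = ⊤ := by
    rw [eq_top_iff]
    rintro ⟨a, b⟩ -
    have ha : ((a, 0) : ZMod p × ZMod p) ∈ S := by
      have := S.nsmul_mem h10 a.val
      simpa [ZMod.natCast_val, ZMod.cast_id] using this
    have hb : ((0, b) : ZMod p × ZMod p) ∈ S := by
      have := S.nsmul_mem h01 b.val
      simpa [ZMod.natCast_val, ZMod.cast_id] using this
    have := S.add_mem ha hb
    simpa using this
  refine ⟨htop, ?_⟩
  rintro ⟨n, c, hne, hcov⟩
  obtain ⟨i, hi⟩ := hcov (1, 2)
  apply hne i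
  rw [eq_top_iff, ← htop]
  exact NonUnitalSubring.closure_le.mpr (by simpa using hi)
end

section
/- For every prime p > 2, the ring F_p × F_p[t]/(t²) is generated as a ring by the element a = (1, t − 1): one has a − a^p = (0, t) and ((p+1)/2)·(a^p + a^{2p}) = (1, 0), so the subring generated by a is everything. Hence F_p × F_p[t]/(t²) is not coverable for p > 2. -/
/-- The element `a = (1, t - 1)` of `F_p × F_p[t]/(t²)`. -/
def aElem (p : ℕ) : ZMod p × DualNumber (ZMod p) := (1, DualNumber.eps - 1)

lemma NonUnitalSubring.pow_mem' {R : Type*} [Ring R] (S : NonUnitalSubring R)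
    {a : R} (h : a ∈ S) : ∀ n : ℕ, n ≠ 0 → a ^ n ∈ S := by
  intro n hn
  induction n with
  | zero => exact absurd rfl hn
  | succ m ih =>
    rcases Nat.eq_zero_or_pos m with hm | hm
    · simpa [hm] using h
    · rw [pow_succ]
      exact S.mul_mem (ih hm.ne') h

/-- For every prime `p > 2`, the ring `F_p × F_p[t]/(t²)` is generated as a (non-unital)
ring by `a = (1, t - 1)`: one has `a - a^p = (0, t)` and
`((p+1)/2) • (a^p + a^(2p)) = (1, 0)`, so the subring generated by `a` is everything.
Hence the ring is not coverable. -/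
theorem Fp_times_dual_generated (p : ℕ) (hp : p.Prime) (hp2 : 2 < p) :
    aElem p - aElem p ^ p = (0, DualNumber.eps) ∧
    ((p + 1) / 2 : ℕ) • (aElem p ^ p + aElem p ^ (2 * p)) = (1, 0) ∧
    NonUnitalSubring.closure {aElem p} = ⊤ ∧
    ¬ Coverable (ZMod p × DualNumber (ZMod p)) := by
  haveI := Fact.mk hp
  haveI : NeZero p := ⟨hp.ne_zero⟩
  haveI : CharP (DualNumber (ZMod p)) p := by
    have h : Function.Injective (algebraMap (ZMod p) (DualNumber (ZMod p))) := by
      intro x y h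
      simpa [TrivSqZeroExt.algebraMap_eq_inl'] using congrArg TrivSqZeroExt.fst h
    exact charP_of_injective_algebraMap h p
  have heps : (DualNumber.eps : DualNumber (ZMod p)) ^ p = 0 := by
    have h2 : (DualNumber.eps : DualNumber (ZMod p)) ^ p
        = DualNumber.eps ^ 2 * DualNumber.eps ^ (p - 2) := by
      rw [← pow_add]; congr 1; omega
    rw [h2, pow_two, DualNumber.eps_mul_eps, zero_mul]
  have hsub : (DualNumber.eps - 1 : DualNumber (ZMod p)) ^ p = -1 := by
    rw [sub_pow_char, one_pow, heps, zero_sub]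
  have hap : aElem p ^ p = ((1 : ZMod p), (-1 : DualNumber (ZMod p))) := by
    rw [aElem, Prod.pow_mk, one_pow, hsub]
  have ha2p : aElem p ^ (2 * p) = ((1 : ZMod p), (1 : DualNumber (ZMod p))) := by
    rw [mul_comm, pow_mul, hap, Prod.pow_mk, one_pow, neg_one_sq]
  have goal1 : aElem p - aElem p ^ p = ((0 : ZMod p), DualNumber.eps) := by
    rw [hap, aElem, Prod.mk_sub_mk, sub_self, sub_neg_eq_add, sub_add_cancel]
  have hodd : p % 2 = 1 := by
    rcases hp.eq_two_or_odd with h | h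
    · omega
    · exact h
  have goal2 : ((p + 1) / 2 : ℕ) • (aElem p ^ p + aElem p ^ (2 * p)) =
      ((1 : ZMod p), (0 : DualNumber (ZMod p))) := by
    rw [hap, ha2p, Prod.mk_add_mk, neg_add_cancel, Prod.smul_mk, smul_zero]
    refine Prod.ext ?_ rfl
    show ((p + 1) / 2 : ℕ) • ((1 : ZMod p) + 1) = 1
    have h2 : (p + 1) / 2 * 2 = p + 1 := by omega
    calc ((p + 1) / 2 : ℕ) • ((1 : ZMod p) + 1)
        = (((p + 1) / 2 * 2 : ℕ) : ZMod p) := by push_cast [nsmul_eq_mul]; ring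
      _ = ((p : ZMod p)) + 1 := by rw [h2]; push_cast; ring
      _ = 1 := by rw [ZMod.natCast_self, zero_add]
  have hclos : NonUnitalSubring.closure {aElem p} = ⊤ := by
    set S := NonUnitalSubring.closure {aElem p} with hS
    have ha : aElem p ∈ S := NonUnitalSubring.subset_closure rfl
    have hapm : aElem p ^ p ∈ S := S.pow_mem' ha p hp.ne_zero
    have ha2pm : aElem p ^ (2 * p) ∈ S := S.pow_mem' ha (2 * p) (by omega)
    have h0e : ((0 : ZMod p), (DualNumber.eps : DualNumber (ZMod p))) ∈ S :=
      goal1 ▸ S.sub_mem ha hapm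
    have h10 : ((1 : ZMod p), (0 : DualNumber (ZMod p))) ∈ S :=
      goal2 ▸ nsmul_mem (S.add_mem hapm ha2pm) _
    have h01 : ((0 : ZMod p), (1 : DualNumber (ZMod p))) ∈ S := by
      have h := S.add_mem (S.sub_mem h10 ha) h0e
      have : ((1 : ZMod p), (0 : DualNumber (ZMod p))) - aElem p
          + ((0 : ZMod p), DualNumber.eps) = ((0 : ZMod p), (1 : DualNumber (ZMod p))) := by
        rw [aElem, Prod.mk_sub_mk, Prod.mk_add_mk]
        refine Prod.ext (by simp) ?_
        show (0 : DualNumber (ZMod p)) - (DualNumber.eps - 1) + DualNumber.eps = 1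
        ring
      rwa [this] at h
    rw [eq_top_iff]
    rintro ⟨x, m⟩ -
    have key : ∀ y : ZMod p, ((y.val : ℕ) : DualNumber (ZMod p)) = TrivSqZeroExt.inl y := by
      intro y
      rw [← map_natCast (TrivSqZeroExt.inlHom (ZMod p) (ZMod p)) y.val, ZMod.natCast_val,
        ZMod.cast_id]
      rfl
    have hx : (x, m) = x.val • ((1 : ZMod p), (0 : DualNumber (ZMod p)))
        + m.fst.val • ((0 : ZMod p), (1 : DualNumber (ZMod p)))
        + m.snd.val • ((0 : ZMod p), (DualNumber.eps : DualNumber (ZMod p))) := by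
      rw [Prod.smul_mk, Prod.smul_mk, Prod.smul_mk, Prod.mk_add_mk, Prod.mk_add_mk]
      refine Prod.ext ?_ ?_
      · show x = x.val • (1 : ZMod p) + m.fst.val • (0 : ZMod p) + m.snd.val • (0 : ZMod p)
        simp [nsmul_eq_mul, ZMod.natCast_val, ZMod.cast_id]
      · show m = x.val • (0 : DualNumber (ZMod p)) + m.fst.val • 1 + m.snd.val • DualNumber.eps
        rw [smul_zero, zero_add, nsmul_eq_mul, mul_one, key, ← Nat.cast_smul_eq_nsmul (ZMod p),
          ZMod.natCast_val, ZMod.cast_id, ← DualNumber.inr_eq_smul_eps,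
          TrivSqZeroExt.inl_fst_add_inr_snd_eq]
    rw [hx]
    exact S.add_mem (S.add_mem (nsmul_mem h10 _) (nsmul_mem h01 _)) (nsmul_mem h0e _)
  refine ⟨goal1, goal2, hclos, ?_⟩
  rintro ⟨n, c, hne, hcov⟩
  obtain ⟨i, hi⟩ := hcov (aElem p)
  apply hne i
  have hle : NonUnitalSubring.closure {aElem p} ≤ c i :=
    NonUnitalSubring.closure_le.mpr (Set.singleton_subset_iff.mpr hi)
  rw [hclos] at hle
  exact top_le_iff.mp hle
end

section
/- Let R be a finite commutative local ring with maximal ideal J and residue field R/J of prime order p. If J is principal (equivalently dim_{F_p} J/J² ≤ 1), then R is generated as a ring by a single element and hence is not a union of proper subrings. -/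
/-- A finite commutative local ring with residue field of prime order whose maximal ideal
is principal is generated as a (non-unital) ring by a single element, and hence is not
coverable by proper subrings. -/
theorem local_ring_principal_max_ideal_monogenic (R : Type*) [CommRing R] [Finite R]
    [IsLocalRing R] (p : ℕ) (hp : p.Prime)
    (hres : Nat.card (IsLocalRing.ResidueField R) = p)
    (hprinc : (IsLocalRing.maximalIdeal R).IsPrincipal) :
    (∃ a : R, NonUnitalSubring.closure {a} = ⊤) ∧ ¬ Coverable R := by
  obtain ⟨π, hπ⟩ := hprinc
  have hπ : IsLocalRing.maximalIdeal R = Ideal.span {π} := hπ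
  -- every element of R is an integer plus an element of the maximal ideal
  have : Finite (IsLocalRing.ResidueField R) := Quotient.finite _
  have hdec : ∀ r : R, ∃ (n : ℤ) (j : R), j ∈ IsLocalRing.maximalIdeal R ∧ r = n • 1 + j := by
    have htop : AddSubgroup.zmultiples (1 : IsLocalRing.ResidueField R) = ⊤ := by
      apply AddSubgroup.eq_top_of_card_eq
      rw [Nat.card_zmultiples, hres]
      have hdvd : addOrderOf (1 : IsLocalRing.ResidueField R) ∣ p := by
        rw [← hres]; exact addOrderOf_dvd_natCard 1
      rcases (Nat.Prime.eq_one_or_self_of_dvd hp _ hdvd) with h1 | h1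
      · exact absurd (AddMonoid.addOrderOf_eq_one_iff.mp h1) one_ne_zero
      · exact h1
    intro r
    have : IsLocalRing.residue R r ∈ AddSubgroup.zmultiples (1 : IsLocalRing.ResidueField R) := by
      rw [htop]; trivial
    obtain ⟨n, hn⟩ := this
    refine ⟨n, r - n • 1, ?_, by ring⟩
    have : IsLocalRing.residue R (r - n • 1) = 0 := by
      have : IsLocalRing.residue R (n • (1 : R)) = n • (1 : IsLocalRing.ResidueField R) := by
        simp
      simp [map_sub, this, ← hn]
    exact (Ideal.Quotient.eq_zero_iff_mem).mp this
  -- maximal ideal is nilpotent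
  obtain ⟨m, hm⟩ : IsNilpotent (IsLocalRing.maximalIdeal R) := by
    rw [← IsLocalRing.jacobson_eq_maximalIdeal ⊥ bot_ne_top]
    exact IsArtinianRing.isNilpotent_jacobson_bot
  -- the generator
  set a : R := 1 + π with ha
  have hπmem : π ∈ IsLocalRing.maximalIdeal R := by
    rw [hπ]; exact Ideal.mem_span_singleton_self π
  have haunit : IsUnit a := by
    have := IsLocalRing.isUnit_one_sub_self_of_mem_nonunits (-π) (by simpa using hπmem)
    simpa [ha, sub_neg_eq_add] using this
  set S := NonUnitalSubring.closure ({a} : Set R) with hS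
  have haS : a ∈ S := NonUnitalSubring.subset_closure rfl
  have h1S : (1 : R) ∈ S := by
    obtain ⟨u, hu⟩ := haunit
    have hord : u ^ orderOf u = 1 := pow_orderOf_eq_one u
    have hpos : 0 < orderOf u := orderOf_pos u
    have : a ^ orderOf u = 1 := by
      rw [← hu, ← Units.val_pow_eq_pow_val, hord, Units.val_one]
    rw [← this]
    obtain ⟨k, hk⟩ := Nat.exists_eq_succ_of_ne_zero hpos.ne'
    rw [hk]
    clear hk this hord
    induction k with
    | zero => simpa using haS
    | succ n ih => rw [pow_succ]; exact S.mul_mem ih haS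
  have hπS : π ∈ S := by
    have : π = a - 1 := by rw [ha]; ring
    rw [this]; exact S.sub_mem haS h1S
  have hπkS : ∀ k : ℕ, π ^ k ∈ S := by
    intro k
    induction k with
    | zero => simpa using h1S
    | succ n ih => rw [pow_succ]; exact S.mul_mem ih hπS
  -- main induction
  have key : ∀ t k : ℕ, m ≤ k + t → ∀ r ∈ (IsLocalRing.maximalIdeal R) ^ k, r ∈ S := by
    intro t
    induction t with
    | zero =>
      intro k hk r hr
      have : (IsLocalRing.maximalIdeal R) ^ k ≤ (IsLocalRing.maximalIdeal R) ^ m :=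
        Ideal.pow_le_pow_right (by omega)
      have := this hr
      rw [hm] at this
      simpa using (this : r ∈ (⊥ : Ideal R)) ▸ S.zero_mem
    | succ t ih =>
      intro k hk r hr
      rw [hπ, Ideal.span_singleton_pow, Ideal.mem_span_singleton'] at hr
      obtain ⟨c, hc⟩ := hr
      obtain ⟨n, j, hj, hcnj⟩ := hdec c
      have hr2 : r = n • π ^ k + j * π ^ k := by
        rw [← hc, hcnj, add_mul, smul_mul_assoc, one_mul]
      have hmem : j * π ^ k ∈ (IsLocalRing.maximalIdeal R) ^ (k + 1) := by
        rw [pow_succ, mul_comm j (π ^ k)]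
        exact Ideal.mul_mem_mul (by rw [hπ, Ideal.span_singleton_pow]; exact Ideal.mem_span_singleton_self _) hj
      rw [hr2]
      exact S.add_mem (S.zsmul_mem (hπkS k) n) (ih (k + 1) (by omega) _ hmem)
  have hStop : S = ⊤ := by
    rw [eq_top_iff]
    intro r _
    exact key m 0 (by omega) r (by simp)
  refine ⟨⟨a, hStop⟩, ?_⟩
  rintro ⟨N, c, hne, hcov⟩
  obtain ⟨i, hi⟩ := hcov a
  apply hne i
  rw [eq_top_iff, ← hStop, hS]
  exact NonUnitalSubring.closure_le.mpr (by simpa using hi)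
end
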